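/- arXiv:1509.01605 — 4 statements merged into one kernel-verified Lean document; each statement's English description precedes it below -/
import Mathlib

section
/- The periodized q-Whittaker Markov chain is irreducible on Ω_{L,N;n1,n2}: one can pass from any dimer covering η ∈ Ω_{L,N;n1,n2} to any other covering η′ ∈ Ω_{L,N;n1,n2} by a finite chain of elementary moves, each of which shifts a single vertical dimer (particle) one step in the +e1 direction (equivalently, rotates the three dimers around one hexagonal face) while remaining inside Ω_{L,N;n1,n2}. -/
/-!
Dimer coverings (perfect matchings) of the hexagonal lattice `Λ_{L,N}` periodized with
period `L` in the `e₁` direction and period `N` in the `e₂` direction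
(Corwin–Toninelli, "A (2+1)-dimensional growth process with explicit stationary measures").

Black vertices, white vertices and hexagonal faces are all indexed by
`(ℤ/Lℤ) × (ℤ/Nℤ)`.  The edge of type `j ∈ {0,1,2}` at the black vertex `b = (s,t)` joins
`b` to the white vertex `whiteEnd b j`; type `0` edges are the vertical ones ("particles"),
type `1` edges are the north-west oriented ones, type `2` edges are the remaining
(horizontal) ones.  A face `g = (s,t)` is bordered by the six edges
`(s,t,0), (s-1,t,0), (s,t,1), (s,t-1,1), (s-1,t,2), (s,t-1,2)`; stepping from a face to an
adjacent face in direction `+e₁` crosses a vertical edge with the white vertex on the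
right, stepping in direction `+e₂` crosses a north-west edge with the white vertex on the
left.
-/

open scoped Classical

noncomputable section

namespace HexDimers

/-- The common index set for black vertices, white vertices and faces of `Λ_{L,N}`. -/
abbrev Idx (L N : ℕ) := ZMod L × ZMod N

variable {L N : ℕ}

/-- The white endpoint of the edge of type `j` at the black vertex `b`:
type `0` is vertical, type `1` is north-west, type `2` is horizontal. -/
def whiteEnd (b : Idx L N) : Fin 3 → Idx L N :=
  ![b, (b.1 - 1, b.2 + 1), (b.1, b.2 + 1)]

/-- A candidate dimer covering: for every black vertex, the type of the dimer covering it. -/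
abbrev Covering (L N : ℕ) := Idx L N → Fin 3

/-- Perfect matchings (dimer coverings): distinct black vertices are matched to distinct
white vertices (hence, by counting, every white vertex is covered exactly once). -/
def IsCovering (M : Covering L N) : Prop :=
  Function.Injective fun b => whiteEnd b (M b)

/-- The number `n₁` of vertical dimers of a covering. -/
def nVert [NeZero L] [NeZero N] (M : Covering L N) : ℕ :=
  (Finset.univ.filter fun b : Idx L N => M b = 0).card

/-- The number `n₂` of north-west oriented dimers of a covering. -/
def nNW [NeZero L] [NeZero N] (M : Covering L N) : ℕ :=
  (Finset.univ.filter fun b : Idx L N => M b = 1).card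

/-- `Ω_{L,N;n₁,n₂}`: the dimer coverings of `Λ_{L,N}` with `n₁` vertical dimers and `n₂`
north-west oriented dimers. -/
def Omega (L N : ℕ) [NeZero L] [NeZero N] (n1 n2 : ℕ) : Set (Covering L N) :=
  {M | IsCovering M ∧ nVert M = n1 ∧ nNW M = n2}

/-- The six directions in which a face of `Λ_{L,N}` can be left towards an adjacent face:
`R/Lft` are `±e₁`, `U/D` are `±e₂`, and `UL/DR` are `∓(e₁ - e₂)`. -/
inductive Dir | R | Lft | U | D | UL | DR
  deriving DecidableEq

/-- The face reached from the face `g` by one step in direction `d`. -/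
def nextFace (g : Idx L N) : Dir → Idx L N
  | .R => (g.1 + 1, g.2)
  | .Lft => (g.1 - 1, g.2)
  | .U => (g.1, g.2 + 1)
  | .D => (g.1, g.2 - 1)
  | .UL => (g.1 - 1, g.2 + 1)
  | .DR => (g.1 + 1, g.2 - 1)

/-- The edge (given by its black vertex together with its type) crossed when stepping from
the face `g` in direction `d`. -/
def crossEdge (g : Idx L N) : Dir → Idx L N × Fin 3
  | .R => ((g.1, g.2), 0)
  | .Lft => ((g.1 - 1, g.2), 0)
  | .U => ((g.1, g.2), 1)
  | .D => ((g.1, g.2 - 1), 1)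
  | .UL => ((g.1 - 1, g.2), 2)
  | .DR => ((g.1, g.2 - 1), 2)

/-- The sign `ε_e` of a crossing: `+1` if the edge is crossed with the white vertex on the
right, `-1` if it is crossed with the white vertex on the left. -/
def crossSign : Dir → ℤ
  | .R => 1
  | .Lft => -1
  | .U => -1
  | .D => 1
  | .UL => 1
  | .DR => -1

/-- Whether the edge `e` (black vertex and type) is occupied by a dimer of `M`. -/
def occupiedEdge (M : Covering L N) (e : Idx L N × Fin 3) : Prop := M e.1 = e.2

/-- The elementary move at the face `g` is allowed when the three boundary edges of `g`
with the white vertex on the left are all occupied. -/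
def RotatableAt (M : Covering L N) (g : Idx L N) : Prop :=
  M g = 1 ∧ M (g.1 - 1, g.2) = 0 ∧ M (g.1, g.2 - 1) = 2

/-- The elementary move (rotation of three dimers around the face `g`): the vertical dimer
of the face is shifted by `+e₁`. -/
def rotate (M : Covering L N) (g : Idx L N) : Covering L N := fun b =>
  if b = g then 0
  else if b = (g.1 - 1, g.2) then 2
  else if b = (g.1, g.2 - 1) then 1
  else M b

/-- One elementary move inside `Ω_{L,N;n₁,n₂}`. -/
def ElemMove (L N : ℕ) [NeZero L] [NeZero N] (n1 n2 : ℕ) (M M' : Covering L N) : Prop :=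
  M ∈ Omega L N n1 n2 ∧ M' ∈ Omega L N n1 n2 ∧
    ∃ g : Idx L N, RotatableAt M g ∧ M' = rotate M g

lemma fin3 (x : Fin 3) : x = 0 ∨ x = 1 ∨ x = 2 := by revert x; decide

/-- indicator -/
def ind (P : Prop) : ℤ := if P then 1 else 0

lemma ind_nonneg (P : Prop) : 0 ≤ ind P := by unfold ind; split <;> norm_num

@[simp] lemma whiteEnd_zero (b : Idx L N) : whiteEnd b 0 = b := rfl
@[simp] lemma whiteEnd_one (b : Idx L N) : whiteEnd b 1 = (b.1 - 1, b.2 + 1) := rfl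
@[simp] lemma whiteEnd_two (b : Idx L N) : whiteEnd b 2 = (b.1, b.2 + 1) := rfl

lemma i_black (M : Covering L N) (b : Idx L N) :
    ind (M b = 0) + ind (M b = 1) + ind (M b = 2) = 1 := by
  unfold ind
  rcases fin3 (M b) with h | h | h <;> simp [h]

lemma inj_pt (hM : IsCovering M) {b b' : Idx L N}
    (h : whiteEnd b (M b) = whiteEnd b' (M b')) : b = b' := hM h

/-- the white vertex `w` is covered by exactly one of its three candidate blacks -/
lemma white_sum [NeZero L] [NeZero N] {M : Covering L N} (hM : IsCovering M) (w : Idx L N) :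
    ind (M w = 0) + ind (M (w.1 + 1, w.2 - 1) = 1) + ind (M (w.1, w.2 - 1) = 2) = 1 := by
  have hbij : Function.Bijective (fun b : Idx L N => whiteEnd b (M b)) :=
    Finite.injective_iff_bijective.mp hM
  -- auxiliary facts: whiteEnds of the three candidates are all `w`
  have e0 : whiteEnd w 0 = w := rfl
  have e1 : whiteEnd (w.1 + 1, w.2 - 1) 1 = w := by simp [whiteEnd]
  have e2 : whiteEnd (w.1, w.2 - 1) 2 = w := by simp [whiteEnd]
  -- pairwise exclusivity
  have ex01 : ¬ (M w = 0 ∧ M (w.1 + 1, w.2 - 1) = 1) := by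
    rintro ⟨h0, h1⟩
    have hb : w = (w.1 + 1, w.2 - 1) := inj_pt hM (by rw [h0, h1, e0, e1])
    rw [← hb] at h1; rw [h0] at h1; exact absurd h1 (by decide)
  have ex02 : ¬ (M w = 0 ∧ M (w.1, w.2 - 1) = 2) := by
    rintro ⟨h0, h2⟩
    have hb : w = (w.1, w.2 - 1) := inj_pt hM (by rw [h0, h2, e0, e2])
    rw [← hb] at h2; rw [h0] at h2; exact absurd h2 (by decide)
  have ex12 : ¬ (M (w.1 + 1, w.2 - 1) = 1 ∧ M (w.1, w.2 - 1) = 2) := by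
    rintro ⟨h1, h2⟩
    have hb : (w.1 + 1, w.2 - 1) = (w.1, w.2 - 1) := inj_pt hM (by rw [h1, h2, e1, e2])
    rw [hb] at h1; rw [h1] at h2; exact absurd h2 (by decide)
  -- existence
  have hex : M w = 0 ∨ M (w.1 + 1, w.2 - 1) = 1 ∨ M (w.1, w.2 - 1) = 2 := by
    obtain ⟨b, hb⟩ := hbij.2 w
    simp only at hb
    rcases fin3 (M b) with h | h | h
    · left; rw [h, whiteEnd_zero] at hb; rwa [hb] at h
    · right; left; rw [h, whiteEnd_one] at hb
      have : b = (w.1 + 1, w.2 - 1) := by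
        rw [← hb]; simp
      rwa [this] at h
    · right; right; rw [h, whiteEnd_two] at hb
      have : b = (w.1, w.2 - 1) := by
        rw [← hb]; simp
      rwa [this] at h
  unfold ind
  rcases hex with h | h | h
  · rw [if_pos h, if_neg (fun h' => ex01 ⟨h, h'⟩), if_neg (fun h' => ex02 ⟨h, h'⟩)]; ring
  · rw [if_pos h, if_neg (fun h' => ex01 ⟨h', h⟩), if_neg (fun h' => ex12 ⟨h, h'⟩)]; ring
  · rw [if_pos h, if_neg (fun h' => ex02 ⟨h', h⟩), if_neg (fun h' => ex12 ⟨h', h⟩)]; ring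

/-- Sum of `f` over `[0, x)` (negatively oriented for `x < 0`). -/
def intAcc (f : ℤ → ℤ) (x : ℤ) : ℤ :=
  ∑ i ∈ Finset.range x.toNat, f i - ∑ i ∈ Finset.range (-x).toNat, f (-(i : ℤ) - 1)

@[simp] lemma intAcc_zero (f : ℤ → ℤ) : intAcc f 0 = 0 := by simp [intAcc]

lemma intAcc_succ (f : ℤ → ℤ) (x : ℤ) : intAcc f (x + 1) = intAcc f x + f x := by
  rcases le_or_gt 0 x with hx | hx
  · have h1 : (x + 1).toNat = x.toNat + 1 := by omega
    have h2 : (-x).toNat = 0 := by omega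
    have h3 : (-(x + 1)).toNat = 0 := by omega
    have h4 : ((x.toNat : ℤ)) = x := Int.toNat_of_nonneg hx
    rw [intAcc, intAcc, h1, h2, h3, Finset.sum_range_succ, h4]
    simp only [Finset.range_zero, Finset.sum_empty]; ring
  · have h1 : (x + 1).toNat = 0 := by omega
    have h2 : x.toNat = 0 := by omega
    have h3 : (-x).toNat = (-(x + 1)).toNat + 1 := by omega
    have h4 : (((-(x + 1)).toNat : ℤ)) = -(x + 1) := Int.toNat_of_nonneg (by omega)
    rw [intAcc, intAcc, h1, h2, h3, Finset.sum_range_succ, h4]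
    have : -(-(x + 1)) - 1 = x := by ring
    rw [this]; ring

lemma intAcc_pred (f : ℤ → ℤ) (x : ℤ) : intAcc f (x - 1) = intAcc f x - f (x - 1) := by
  have := intAcc_succ f (x - 1)
  rw [sub_add_cancel] at this
  linarith

lemma intAcc_add (f g : ℤ → ℤ) (x : ℤ) :
    intAcc (fun i => f i + g i) x = intAcc f x + intAcc g x := by
  simp [intAcc, Finset.sum_add_distrib]; ring

lemma intAcc_sub (f g : ℤ → ℤ) (x : ℤ) :
    intAcc (fun i => f i - g i) x = intAcc f x - intAcc g x := by
  simp [intAcc, Finset.sum_sub_distrib]; ring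

lemma intAcc_dvd (f : ℤ → ℤ) (d : ℤ) (hf : ∀ i, d ∣ f i) (x : ℤ) : d ∣ intAcc f x :=
  dvd_sub (Finset.dvd_sum fun i _ => hf _) (Finset.dvd_sum fun i _ => hf _)

lemma intAcc_telescope (h : ℤ → ℤ) (x : ℤ) :
    intAcc (fun i => h (i + 1) - h i) x = h x - h 0 := by
  induction x using Int.induction_on with
  | zero => simp
  | succ k ih => rw [intAcc_succ, ih]; push_cast; ring
  | pred k ih =>
      have := intAcc_pred (fun i => h (i + 1) - h i) (-(k : ℤ))
      rw [ih] at this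
      rw [show (-(k : ℤ) - 1) = -((k : ℤ) + 1) by ring] at this ⊢
      rw [this]
      have : -((k : ℤ) + 1) + 1 = -(k : ℤ) := by ring
      rw [this]; ring

lemma intAcc_ofNat (f : ℤ → ℤ) (n : ℕ) :
    intAcc f n = ∑ i ∈ Finset.range n, f i := by
  induction n with
  | zero => simp
  | succ k ih =>
      rw [show ((k + 1 : ℕ) : ℤ) = (k : ℤ) + 1 by push_cast; ring, intAcc_succ, ih,
        Finset.sum_range_succ]

lemma intAcc_periodic (f : ℤ → ℤ) (T : ℕ) (hf : ∀ i, f (i + T) = f i) (x : ℤ) :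
    intAcc f (x + T) = intAcc f x + ∑ i ∈ Finset.range T, f i := by
  induction x using Int.induction_on with
  | zero => rw [zero_add, intAcc_ofNat]; simp
  | succ k ih =>
      have e : (k : ℤ) + 1 + T = (k + T) + 1 := by ring
      rw [e, intAcc_succ, ih, intAcc_succ, hf]
      ring
  | pred k ih =>
      have e : (-(k : ℤ) - 1 + T) = (-(k : ℤ) + T) - 1 := by ring
      rw [e, intAcc_pred, ih, intAcc_pred, show (-(k:ℤ) + T - 1) = (-(k:ℤ) - 1) + T by ring, hf]
      ring

variable (L N) in
/-- reduction of integer coordinates to the torus -/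
def red (x y : ℤ) : Idx L N := ((x : ZMod L), (y : ZMod N))

lemma red_shift (x y : ℤ) (p q : ℤ) : red L N (x + p * L) (y + q * N) = red L N x y := by
  unfold red
  simp only [Prod.mk.injEq]
  constructor <;> push_cast <;> simp

/-- increment of the height function when stepping from face `(x,y)` to `(x+1,y)` -/
def incR (M : Covering L N) (x y : ℤ) : ℤ := 1 - 3 * ind (M (red L N x y) = 0)

/-- increment of the height function when stepping from face `(x,y)` to `(x,y+1)` -/
def incU (M : Covering L N) (x y : ℤ) : ℤ := 3 * ind (M (red L N x y) = 1) - 1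

/-- the (planar-lifted) height function of a covering -/
def phi (M : Covering L N) (x y : ℤ) : ℤ :=
  intAcc (fun s => incR M s 0) x + intAcc (fun t => incU M x t) y

lemma phi_U (M : Covering L N) (x y : ℤ) : phi M x (y + 1) = phi M x y + incU M x y := by
  unfold phi; rw [intAcc_succ]; ring

lemma curl [NeZero L] [NeZero N] {M : Covering L N} (hM : IsCovering M) (x t : ℤ) :
    incR M x (t + 1) - incR M x t = incU M (x + 1) t - incU M x t := by
  have hw := white_sum hM (red L N x (t + 1))
  have hb := i_black M (red L N x t)
  have e1 : ((red L N x (t + 1)).1 + 1, (red L N x (t + 1)).2 - 1) = red L N (x + 1) t := by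
    unfold red; simp only [Prod.mk.injEq]; constructor <;> (push_cast; try ring)
  have e2 : ((red L N x (t + 1)).1, (red L N x (t + 1)).2 - 1) = red L N x t := by
    unfold red; simp only [Prod.mk.injEq]; constructor <;> (push_cast; try ring)
  rw [e1, e2] at hw
  unfold incR incU
  linarith

lemma phi_R [NeZero L] [NeZero N] {M : Covering L N} (hM : IsCovering M) (x y : ℤ) :
    phi M (x + 1) y = phi M x y + incR M x y := by
  have h2 : (fun t => incU M (x + 1) t)
      = fun t => incU M x t + ((fun t => incR M x t) (t + 1) - (fun t => incR M x t) t) := by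
    funext t
    have := curl hM x t
    simp only
    linarith
  unfold phi
  rw [intAcc_succ, h2, intAcc_add, intAcc_telescope]
  ring
lemma red_congr {x x' y y' : ℤ} (h1 : (L : ℤ) ∣ x - x') (h2 : (N : ℤ) ∣ y - y') :
    red L N x y = red L N x' y' := by
  unfold red
  simp only [Prod.mk.injEq]
  constructor
  · exact (ZMod.intCast_eq_intCast_iff _ _ _).mpr ((Int.modEq_iff_dvd).mpr (by
      obtain ⟨c, hc⟩ := h1; exact ⟨-c, by linarith⟩))
  · exact (ZMod.intCast_eq_intCast_iff _ _ _).mpr ((Int.modEq_iff_dvd).mpr (by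
      obtain ⟨c, hc⟩ := h2; exact ⟨-c, by linarith⟩))

lemma red_natCast (i k : ℕ) : red L N (i : ℤ) (k : ℤ) = ((i : ZMod L), (k : ZMod N)) := by
  unfold red
  simp only [Prod.mk.injEq]
  constructor <;> push_cast <;> rfl

/-- row count of vertical dimers -/
def rV [NeZero L] [NeZero N] (M : Covering L N) (t : ZMod N) : ℤ :=
  ∑ s : ZMod L, ind (M (s, t) = 0)

/-- column count of north-west dimers -/
def cA [NeZero L] [NeZero N] (M : Covering L N) (s : ZMod L) : ℤ :=
  ∑ t : ZMod N, ind (M (s, t) = 1)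

lemma sum_zmod_eq_range [NeZero L] (f : ZMod L → ℤ) :
    ∑ i ∈ Finset.range L, f (i : ZMod L) = ∑ s : ZMod L, f s := by
  rw [← Fin.sum_univ_eq_sum_range (fun i => f (i : ZMod L)) L]
  refine Fintype.sum_bijective (fun i : Fin L => ((i : ℕ) : ZMod L)) ?_ _ _ (fun i => rfl)
  constructor
  · intro i j h
    have hi := ZMod.val_cast_of_lt i.2
    have hj := ZMod.val_cast_of_lt j.2
    have := congrArg ZMod.val h
    simp only at this
    rw [hi, hj] at this
    exact Fin.ext this
  · intro s
    exact ⟨⟨s.val, ZMod.val_lt s⟩, ZMod.natCast_rightInverse s⟩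

lemma card_zmod_int [NeZero L] : (∑ _s : ZMod L, (1 : ℤ)) = L := by
  simp [Finset.card_univ, ZMod.card]

lemma rV_succ [NeZero L] [NeZero N] {M : Covering L N} (hM : IsCovering M) (t : ZMod N) :
    rV M (t + 1) = rV M t := by
  have hw : ∑ s : ZMod L, (ind (M (s, t + 1) = 0) + ind (M (s + 1, t) = 1)
      + ind (M (s, t) = 2)) = L := by
    rw [← card_zmod_int (L := L)]
    refine Finset.sum_congr rfl fun s _ => ?_
    have := white_sum hM (s, t + 1)
    simpa using this
  have hb : ∑ s : ZMod L, (ind (M (s, t) = 0) + ind (M (s, t) = 1) + ind (M (s, t) = 2)) = L := by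
    rw [← card_zmod_int (L := L)]
    exact Finset.sum_congr rfl fun s _ => i_black M (s, t)
  have hre : ∑ s : ZMod L, ind (M (s + 1, t) = 1) = ∑ s : ZMod L, ind (M (s, t) = 1) :=
    Fintype.sum_equiv (Equiv.addRight 1) _ _ (fun s => rfl)
  rw [Finset.sum_add_distrib, Finset.sum_add_distrib] at hw hb
  unfold rV
  linarith

lemma cA_succ [NeZero L] [NeZero N] {M : Covering L N} (hM : IsCovering M) (s : ZMod L) :
    cA M (s + 1) = cA M s := by
  have hw : ∑ y : ZMod N, (ind (M (s, y) = 0) + ind (M (s + 1, y - 1) = 1)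
      + ind (M (s, y - 1) = 2)) = N := by
    rw [← card_zmod_int (L := N)]
    refine Finset.sum_congr rfl fun y _ => ?_
    have := white_sum hM (s, y)
    simpa using this
  have hb : ∑ y : ZMod N, (ind (M (s, y) = 0) + ind (M (s, y) = 1) + ind (M (s, y) = 2)) = N := by
    rw [← card_zmod_int (L := N)]
    exact Finset.sum_congr rfl fun y _ => i_black M (s, y)
  have hre1 : ∑ y : ZMod N, ind (M (s + 1, y - 1) = 1) = ∑ y : ZMod N, ind (M (s + 1, y) = 1) :=
    Fintype.sum_equiv (Equiv.subRight 1) _ _ (fun y => rfl)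
  have hre2 : ∑ y : ZMod N, ind (M (s, y - 1) = 2) = ∑ y : ZMod N, ind (M (s, y) = 2) :=
    Fintype.sum_equiv (Equiv.subRight 1) _ _ (fun y => rfl)
  rw [Finset.sum_add_distrib, Finset.sum_add_distrib] at hw hb
  rw [hre1, hre2] at hw
  unfold cA
  linarith

lemma rV_const [NeZero L] [NeZero N] {M : Covering L N} (hM : IsCovering M) (t : ZMod N) :
    rV M t = rV M 0 := by
  have key : ∀ k : ℕ, rV M (k : ZMod N) = rV M 0 := by
    intro k
    induction k with
    | zero => norm_num
    | succ m ih => push_cast; rw [rV_succ hM]; push_cast at ih; exact ih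
  have := key t.val
  rwa [ZMod.natCast_rightInverse t] at this

lemma cA_const [NeZero L] [NeZero N] {M : Covering L N} (hM : IsCovering M) (s : ZMod L) :
    cA M s = cA M 0 := by
  have key : ∀ k : ℕ, cA M (k : ZMod L) = cA M 0 := by
    intro k
    induction k with
    | zero => norm_num
    | succ m ih => push_cast; rw [cA_succ hM]; push_cast at ih; exact ih
  have := key s.val
  rwa [ZMod.natCast_rightInverse s] at this

lemma nVert_eq_sum [NeZero L] [NeZero N] (M : Covering L N) :
    (nVert M : ℤ) = ∑ t : ZMod N, rV M t := by
  unfold nVert rV ind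
  rw [Finset.card_filter]
  push_cast
  rw [Fintype.sum_prod_type]
  rw [Finset.sum_comm]
  apply Finset.sum_congr rfl
  intro t _
  apply Finset.sum_congr rfl
  intro s _
  split <;> norm_num

lemma nNW_eq_sum [NeZero L] [NeZero N] (M : Covering L N) :
    (nNW M : ℤ) = ∑ s : ZMod L, cA M s := by
  unfold nNW cA ind
  rw [Finset.card_filter]
  push_cast
  rw [Fintype.sum_prod_type]
  apply Finset.sum_congr rfl
  intro s _
  apply Finset.sum_congr rfl
  intro t _
  split <;> norm_num

lemma rV_total [NeZero L] [NeZero N] {M : Covering L N} (hM : IsCovering M) :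
    (N : ℤ) * rV M 0 = nVert M := by
  rw [nVert_eq_sum, Finset.sum_congr rfl fun t _ => rV_const hM t]
  simp [Finset.card_univ, ZMod.card, mul_comm]

lemma cA_total [NeZero L] [NeZero N] {M : Covering L N} (hM : IsCovering M) :
    (L : ℤ) * cA M 0 = nNW M := by
  rw [nNW_eq_sum, Finset.sum_congr rfl fun s _ => cA_const hM s]
  simp [Finset.card_univ, ZMod.card, mul_comm]

/-- Horizontal periodicity of the height function. -/
lemma phi_periodX [NeZero L] [NeZero N] {M : Covering L N} {v : ℤ}
    (hv : ∀ t, rV M t = v) (x y : ℤ) :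
    phi M (x + L) y = phi M x y + ((L : ℤ) - 3 * v) := by
  have hper : ∀ s : ℤ, incR M (s + L) 0 = incR M s 0 := by
    intro s
    unfold incR
    rw [red_congr (x' := s) (y' := 0) ⟨1, by ring⟩ ⟨0, by ring⟩]
  have hsum : ∑ i ∈ Finset.range L, incR M i 0 = (L : ℤ) - 3 * v := by
    unfold incR
    rw [Finset.sum_sub_distrib]
    simp only [Finset.sum_const, Finset.card_range, nsmul_eq_mul, mul_one]
    rw [← Finset.mul_sum]
    have h2 : ∑ i ∈ Finset.range L, ind (M (red L N i 0) = 0) = v := by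
      have e : ∀ i : ℕ, red L N (i : ℤ) (0 : ℤ) = ((i : ZMod L), (0 : ZMod N)) := by
        intro i
        unfold red
        simp only [Prod.mk.injEq]
        constructor <;> push_cast <;> rfl
      rw [Finset.sum_congr rfl fun i _ => by rw [e i]]
      rw [sum_zmod_eq_range (fun s => ind (M (s, (0 : ZMod N)) = 0))]
      exact hv 0
    rw [h2]
  have hincU : (fun t => incU M (x + L) t) = fun t => incU M x t := by
    funext t
    unfold incU
    rw [red_congr (x' := x) (y' := t) ⟨1, by ring⟩ ⟨0, by ring⟩]
  unfold phi
  rw [intAcc_periodic _ L hper, hsum, hincU]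
  ring

/-- Vertical periodicity of the height function. -/
lemma phi_periodY [NeZero L] [NeZero N] {M : Covering L N} {a : ℤ}
    (ha : ∀ s, cA M s = a) (x y : ℤ) :
    phi M x (y + N) = phi M x y + (3 * a - (N : ℤ)) := by
  have hper : ∀ t : ℤ, incU M x (t + N) = incU M x t := by
    intro t
    unfold incU
    rw [red_congr (x' := x) (y' := t) ⟨0, by ring⟩ ⟨1, by ring⟩]
  have hsum : ∑ i ∈ Finset.range N, incU M x i = 3 * a - (N : ℤ) := by
    unfold incU
    rw [Finset.sum_sub_distrib]
    simp only [Finset.sum_const, Finset.card_range, nsmul_eq_mul, mul_one]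
    rw [← Finset.mul_sum]
    have h2 : ∑ i ∈ Finset.range N, ind (M (red L N x i) = 1) = a := by
      have e : ∀ i : ℕ, red L N x (i : ℤ) = ((x : ZMod L), (i : ZMod N)) := by
        intro i
        unfold red
        simp only [Prod.mk.injEq]
        constructor <;> push_cast <;> rfl
      rw [Finset.sum_congr rfl fun i _ => by rw [e i]]
      rw [sum_zmod_eq_range (fun u => ind (M ((x : ZMod L), u) = 1))]
      exact ha _
    rw [h2]
  unfold phi
  rw [intAcc_periodic _ N hper, hsum]
  ring

lemma phi_periodX_mul [NeZero L] [NeZero N] {M : Covering L N} {v : ℤ}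
    (hv : ∀ t, rV M t = v) (x y : ℤ) (p : ℤ) :
    phi M (x + p * L) y = phi M x y + p * ((L : ℤ) - 3 * v) := by
  induction p using Int.induction_on with
  | zero => simp
  | succ k ih =>
      rw [show x + ((k : ℤ) + 1) * L = (x + k * L) + L by ring, phi_periodX hv, ih]; ring
  | pred k ih =>
      have := phi_periodX hv (x + (-(k:ℤ) - 1) * L) y
      rw [show x + (-(k:ℤ) - 1) * L + L = x + (-(k:ℤ)) * L by ring, ih] at this
      linarith

lemma phi_periodY_mul [NeZero L] [NeZero N] {M : Covering L N} {a : ℤ}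
    (ha : ∀ s, cA M s = a) (x y : ℤ) (q : ℤ) :
    phi M x (y + q * N) = phi M x y + q * (3 * a - (N : ℤ)) := by
  induction q using Int.induction_on with
  | zero => simp
  | succ k ih =>
      rw [show y + ((k : ℤ) + 1) * N = (y + k * N) + N by ring, phi_periodY ha, ih]; ring
  | pred k ih =>
      have := phi_periodY ha x (y + (-(k:ℤ) - 1) * N)
      rw [show y + (-(k:ℤ) - 1) * N + N = y + (-(k:ℤ)) * N by ring, ih] at this
      linarith

lemma phi_period_full [NeZero L] [NeZero N] {M : Covering L N} {v a : ℤ}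
    (hv : ∀ t, rV M t = v) (ha : ∀ s, cA M s = a) (x y p q : ℤ) :
    phi M (x + p * L) (y + q * N) = phi M x y + p * ((L : ℤ) - 3 * v) + q * (3 * a - (N : ℤ)) := by
  rw [phi_periodX_mul hv, phi_periodY_mul ha]
  ring
section Rotate

variable {M : Covering L N} {g : Idx L N}

lemma blk_ne_1 (h1L : (1 : ZMod L) ≠ 0) : (g.1 - 1, g.2) ≠ g := by
  intro h
  rw [Prod.ext_iff] at h
  have := h.1
  simp only [sub_eq_self] at this
  exact h1L this

lemma blk_ne_2 (h1N : (1 : ZMod N) ≠ 0) : (g.1, g.2 - 1) ≠ g := by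
  intro h
  rw [Prod.ext_iff] at h
  have := h.2
  simp only [sub_eq_self] at this
  exact h1N this

lemma blk_ne_3 (h1L : (1 : ZMod L) ≠ 0) : (g.1 - 1, g.2) ≠ (g.1, g.2 - 1) := by
  intro h
  rw [Prod.ext_iff] at h
  have := h.1
  simp only [sub_eq_self] at this
  exact h1L this

lemma rotate_at_g : rotate M g g = 0 := by unfold rotate; rw [if_pos rfl]

lemma rotate_at_B (h1L : (1 : ZMod L) ≠ 0) : rotate M g (g.1 - 1, g.2) = 2 := by
  unfold rotate
  rw [if_neg (blk_ne_1 h1L), if_pos rfl]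

lemma rotate_at_C (h1L : (1 : ZMod L) ≠ 0) (h1N : (1 : ZMod N) ≠ 0) :
    rotate M g (g.1, g.2 - 1) = 1 := by
  unfold rotate
  rw [if_neg (blk_ne_2 h1N), if_neg (Ne.symm (blk_ne_3 h1L)), if_pos rfl]

lemma rotate_other {b : Idx L N} (hb1 : b ≠ g) (hb2 : b ≠ (g.1 - 1, g.2))
    (hb3 : b ≠ (g.1, g.2 - 1)) : rotate M g b = M b := by
  unfold rotate
  rw [if_neg hb1, if_neg hb2, if_neg hb3]

lemma rotate_isCovering [NeZero L] [NeZero N] (hM : IsCovering M) (hrot : RotatableAt M g)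
    (h1L : (1 : ZMod L) ≠ 0) (h1N : (1 : ZMod N) ≠ 0) :
    IsCovering (rotate M g) := by
  obtain ⟨hg1, hg0, hg2⟩ := hrot
  set wA : Idx L N := (g.1 - 1, g.2 + 1) with hwA
  set wB : Idx L N := (g.1 - 1, g.2) with hwB
  set wC : Idx L N := g with hwC
  have hAB : wA ≠ wB := by
    intro h; rw [Prod.ext_iff] at h
    have := h.2; simp only [hwA, hwB, hwC, add_eq_left] at this; exact h1N this
  have hAC : wA ≠ wC := by
    intro h; rw [Prod.ext_iff] at h
    have := h.1; simp only [hwA, hwB, hwC, sub_eq_self] at this; exact h1L this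
  have hBC : wB ≠ wC := by
    intro h; rw [Prod.ext_iff] at h
    have := h.1; simp only [hwA, hwB, hwC, sub_eq_self] at this; exact h1L this
  set σ : Idx L N ≃ Idx L N := (Equiv.swap wA wB).trans (Equiv.swap wB wC) with hσ
  -- the old images of the three special blacks
  have oG : whiteEnd g (M g) = wA := by rw [hg1]; rfl
  have oB : whiteEnd (g.1 - 1, g.2) (M (g.1 - 1, g.2)) = wB := by rw [hg0]; rfl
  have oC : whiteEnd (g.1, g.2 - 1) (M (g.1, g.2 - 1)) = wC := by
    rw [hg2, whiteEnd_two]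
    rw [hwC, Prod.ext_iff]
    constructor
    · rfl
    · exact sub_add_cancel _ _
  have hσA : σ wA = wC := by
    rw [hσ]; simp only [Equiv.trans_apply, Equiv.swap_apply_left]
    try exact Equiv.swap_apply_left _ _
  have hσB : σ wB = wA := by
    rw [hσ]; simp only [Equiv.trans_apply, Equiv.swap_apply_right]
    exact Equiv.swap_apply_of_ne_of_ne hAB hAC
  have hσC : σ wC = wB := by
    rw [hσ]; simp only [Equiv.trans_apply]
    rw [Equiv.swap_apply_of_ne_of_ne (Ne.symm hAC) (Ne.symm hBC)]
    exact Equiv.swap_apply_right _ _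
  have key : ∀ b, whiteEnd b (rotate M g b) = σ (whiteEnd b (M b)) := by
    intro b
    by_cases hb1 : b = g
    · subst hb1
      rw [oG, hσA, rotate_at_g]; rfl
    by_cases hb2 : b = (g.1 - 1, g.2)
    · subst hb2
      rw [oB, hσB, rotate_at_B h1L, whiteEnd_two]
    by_cases hb3 : b = (g.1, g.2 - 1)
    · subst hb3
      rw [oC, hσC, rotate_at_C h1L h1N, whiteEnd_one]
      rw [hwB, Prod.ext_iff]
      constructor
      · rfl
      · exact sub_add_cancel _ _
    · rw [rotate_other hb1 hb2 hb3]
      have nA : whiteEnd b (M b) ≠ wA := by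
        intro h; exact hb1 (inj_pt hM (h.trans oG.symm))
      have nB : whiteEnd b (M b) ≠ wB := by
        intro h; exact hb2 (inj_pt hM (h.trans oB.symm))
      have nC : whiteEnd b (M b) ≠ wC := by
        intro h; exact hb3 (inj_pt hM (h.trans oC.symm))
      rw [hσ]; simp only [Equiv.trans_apply]
      rw [Equiv.swap_apply_of_ne_of_ne nA nB, Equiv.swap_apply_of_ne_of_ne nB nC]
  intro b b' hbb
  simp only at hbb
  rw [key b, key b'] at hbb
  exact hM (σ.injective hbb)

lemma rotate_nVert [NeZero L] [NeZero N] (hrot : RotatableAt M g)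
    (h1L : (1 : ZMod L) ≠ 0) (h1N : (1 : ZMod N) ≠ 0) :
    nVert (rotate M g) = nVert M := by
  obtain ⟨hg1, hg0, hg2⟩ := hrot
  unfold nVert
  have hset : (Finset.univ.filter fun b : Idx L N => rotate M g b = 0)
      = insert g ((Finset.univ.filter fun b : Idx L N => M b = 0).erase (g.1 - 1, g.2)) := by
    ext b
    simp only [Finset.mem_filter, Finset.mem_univ, true_and, Finset.mem_insert,
      Finset.mem_erase]
    by_cases hb1 : b = g
    · subst hb1; simp [rotate_at_g]
    by_cases hb2 : b = (g.1 - 1, g.2)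
    · subst hb2
      rw [rotate_at_B h1L]
      simp [hb1]
    by_cases hb3 : b = (g.1, g.2 - 1)
    · subst hb3
      rw [rotate_at_C h1L h1N]
      simp [hb1, hb2, hg2]
    · rw [rotate_other hb1 hb2 hb3]
      simp [hb1, hb2]
  rw [hset]
  have hgmem : g ∉ (Finset.univ.filter fun b : Idx L N => M b = 0).erase (g.1 - 1, g.2) := by
    simp [hg1]
  have hBmem : (g.1 - 1, g.2) ∈ Finset.univ.filter fun b : Idx L N => M b = 0 := by
    simp [hg0]
  rw [Finset.card_insert_of_notMem hgmem, Finset.card_erase_of_mem hBmem]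
  have : 0 < (Finset.univ.filter fun b : Idx L N => M b = 0).card :=
    Finset.card_pos.mpr ⟨_, hBmem⟩
  omega

lemma rotate_nNW [NeZero L] [NeZero N] (hrot : RotatableAt M g)
    (h1L : (1 : ZMod L) ≠ 0) (h1N : (1 : ZMod N) ≠ 0) :
    nNW (rotate M g) = nNW M := by
  obtain ⟨hg1, hg0, hg2⟩ := hrot
  unfold nNW
  have hset : (Finset.univ.filter fun b : Idx L N => rotate M g b = 1)
      = insert (g.1, g.2 - 1) ((Finset.univ.filter fun b : Idx L N => M b = 1).erase g) := by
    ext b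
    simp only [Finset.mem_filter, Finset.mem_univ, true_and, Finset.mem_insert,
      Finset.mem_erase]
    by_cases hb1 : b = g
    · subst hb1
      rw [rotate_at_g]
      simp [Ne.symm (blk_ne_2 h1N)]
    by_cases hb2 : b = (g.1 - 1, g.2)
    · subst hb2
      rw [rotate_at_B h1L]
      simp [blk_ne_3 h1L, hg0]
    by_cases hb3 : b = (g.1, g.2 - 1)
    · subst hb3
      rw [rotate_at_C h1L h1N]
      simp
    · rw [rotate_other hb1 hb2 hb3]
      simp [hb1, hb3]
  rw [hset]
  have hCmem : (g.1, g.2 - 1) ∉ (Finset.univ.filter fun b : Idx L N => M b = 1).erase g := by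
    simp [hg2]
  have hgmem : g ∈ Finset.univ.filter fun b : Idx L N => M b = 1 := by
    simp [hg1]
  rw [Finset.card_insert_of_notMem hCmem, Finset.card_erase_of_mem hgmem]
  have : 0 < (Finset.univ.filter fun b : Idx L N => M b = 1).card :=
    Finset.card_pos.mpr ⟨_, hgmem⟩
  omega

lemma rotate_mem_Omega [NeZero L] [NeZero N] {n1 n2 : ℕ} (hM : M ∈ Omega L N n1 n2)
    (hrot : RotatableAt M g) (h1L : (1 : ZMod L) ≠ 0) (h1N : (1 : ZMod N) ≠ 0) :
    rotate M g ∈ Omega L N n1 n2 := by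
  obtain ⟨hc, hv, ha⟩ := hM
  exact ⟨rotate_isCovering hc hrot h1L h1N,
    by rw [rotate_nVert hrot h1L h1N]; exact hv,
    by rw [rotate_nNW hrot h1L h1N]; exact ha⟩

end Rotate
section RotPhi

lemma ind_one {P : Prop} (h : P) : ind P = 1 := if_pos h
lemma ind_zero {P : Prop} (h : ¬P) : ind P = 0 := if_neg h

lemma red_succX (x y : ℤ) : red L N (x + 1) y = ((red L N x y).1 + 1, (red L N x y).2) := by
  unfold red
  simp only [Prod.mk.injEq]
  constructor <;> push_cast <;> rfl

lemma red_succY (x y : ℤ) : red L N x (y + 1) = ((red L N x y).1, (red L N x y).2 + 1) := by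
  unfold red
  simp only [Prod.mk.injEq]
  constructor <;> push_cast <;> rfl

variable {M : Covering L N} {g : Idx L N}

lemma addX_ne (h1L : (1 : ZMod L) ≠ 0) (u : Idx L N) : (u.1 + 1, u.2) ≠ u := by
  intro h
  rw [Prod.ext_iff] at h
  have := h.1
  simp only [add_eq_left] at this
  exact h1L this

lemma addY_ne (h1N : (1 : ZMod N) ≠ 0) (u : Idx L N) : (u.1, u.2 + 1) ≠ u := by
  intro h
  rw [Prod.ext_iff] at h
  have := h.2
  simp only [add_eq_left] at this
  exact h1N this

/-- difference of height functions of `rotate M g` and `M`, minus `3·δ_g`. -/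
def Pfun (M Mr : Covering L N) (g : Idx L N) (x y : ℤ) : ℤ :=
  phi Mr x y - phi M x y - 3 * ind (red L N x y = g)

lemma rotate_phi [NeZero L] [NeZero N]
    (hM : IsCovering M) (hMr : IsCovering (rotate M g)) (hrot : RotatableAt M g)
    (h1L : (1 : ZMod L) ≠ 0) (h1N : (1 : ZMod N) ≠ 0) :
    ∃ c : ℤ, ∀ x y : ℤ,
      phi (rotate M g) x y = phi M x y + 3 * ind (red L N x y = g) + c := by
  obtain ⟨hg1, hg0, hg2⟩ := hrot
  set Mr := rotate M g with hMrdef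
  have hMr0 : Mr g = 0 := rotate_at_g
  have hMrB : Mr (g.1 - 1, g.2) = 2 := rotate_at_B h1L
  have hMrC : Mr (g.1, g.2 - 1) = 1 := rotate_at_C h1L h1N
  have stepR : ∀ x y : ℤ, Pfun M Mr g (x + 1) y = Pfun M Mr g x y := by
    intro x y
    unfold Pfun
    rw [phi_R hMr, phi_R hM, red_succX]
    set b := red L N x y with hb
    unfold incR
    rw [← hb]
    by_cases h1 : b = g
    · rw [h1, ind_one rfl, ind_one hMr0, ind_zero (by rw [hg1]; decide),
        ind_zero (addX_ne h1L g)]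
      ring
    by_cases h2 : b = (g.1 - 1, g.2)
    · have e1 : (b.1 + 1, b.2) = g := by
        rw [h2, Prod.ext_iff]
        exact ⟨sub_add_cancel _ _, rfl⟩
      rw [h2, ind_zero (by rw [hMrB]; decide), ind_one hg0, ← h2, ind_one e1,
        ind_zero h1]
      ring
    · have e0 : ind (Mr b = 0) = ind (M b = 0) := by
        by_cases h3 : b = (g.1, g.2 - 1)
        · rw [h3, ind_zero (by rw [hMrC]; decide), ind_zero (by rw [hg2]; decide)]
        · rw [hMrdef, rotate_other h1 h2 h3]
      have e1 : ind ((b.1 + 1, b.2) = g) = 0 := by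
        apply ind_zero
        intro h
        apply h2
        rw [Prod.ext_iff] at h ⊢
        exact ⟨by rw [← h.1]; ring, h.2⟩
      rw [e0, e1, ind_zero h1]
      ring
  have stepU : ∀ x y : ℤ, Pfun M Mr g x (y + 1) = Pfun M Mr g x y := by
    intro x y
    unfold Pfun
    rw [phi_U, phi_U, red_succY]
    set b := red L N x y with hb
    unfold incU
    rw [← hb]
    by_cases h1 : b = g
    · rw [h1, ind_one rfl, ind_zero (by rw [hMr0]; decide), ind_one hg1,
        ind_zero (addY_ne h1N g)]
      ring
    by_cases h3 : b = (g.1, g.2 - 1)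
    · have e1 : (b.1, b.2 + 1) = g := by
        rw [h3, Prod.ext_iff]
        exact ⟨rfl, sub_add_cancel _ _⟩
      rw [h3, ind_one hMrC, ind_zero (by rw [hg2]; decide), ← h3, ind_one e1,
        ind_zero h1]
      ring
    · have e0 : ind (Mr b = 1) = ind (M b = 1) := by
        by_cases h2 : b = (g.1 - 1, g.2)
        · rw [h2, ind_zero (by rw [hMrB]; decide), ind_zero (by rw [hg0]; decide)]
        · rw [hMrdef, rotate_other h1 h2 h3]
      have e1 : ind ((b.1, b.2 + 1) = g) = 0 := by
        apply ind_zero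
        intro h
        apply h3
        rw [Prod.ext_iff] at h ⊢
        exact ⟨h.1, by rw [← h.2]; ring⟩
      rw [e0, e1, ind_zero h1]
      ring
  have colconst : ∀ x y : ℤ, Pfun M Mr g x y = Pfun M Mr g x 0 := by
    intro x y
    induction y using Int.induction_on with
    | zero => rfl
    | succ k ih => rw [stepU, ih]
    | pred k ih =>
        have := stepU x (-(k : ℤ) - 1)
        rw [show (-(k:ℤ) - 1 + 1) = -(k:ℤ) by ring] at this
        exact this.symm.trans ih
  have rowconst : ∀ x : ℤ, Pfun M Mr g x 0 = Pfun M Mr g 0 0 := by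
    intro x
    induction x using Int.induction_on with
    | zero => rfl
    | succ k ih => rw [stepR, ih]
    | pred k ih =>
        have := stepR (-(k : ℤ) - 1) 0
        rw [show (-(k:ℤ) - 1 + 1) = -(k:ℤ) by ring] at this
        exact this.symm.trans ih
  refine ⟨Pfun M Mr g 0 0, fun x y => ?_⟩
  have := (colconst x y).trans (rowconst x)
  unfold Pfun at this ⊢
  linarith

end RotPhi
/-- The integer contradiction at the heart of the irreducibility proof: a closed
descending walk is impossible when `0 < n₁`, `0 < n₂`, `n₁ + n₂ < NL`. -/
lemma int_walk_contra (L N v a u l r p q m : ℤ)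
    (hv1 : 1 ≤ v) (ha1 : 1 ≤ a)
    (hvL : v + 1 ≤ L) (haN : a + 1 ≤ N)
    (hbound : N * v + L * a < N * L)
    (hu0 : 0 ≤ u) (hl0 : 0 ≤ l) (hr0 : 0 ≤ r)
    (hm1 : 1 ≤ m) (hsum : u + l + r = m)
    (hA2 : r - l = p * L) (hA3 : u - r = q * N)
    (hmain : -m = p * (L - 3 * v) + q * (3 * a - N)) : False := by
  have hrpq : r = p * v - q * a := by
    have h9 : 3 * r = 3 * (p * v) - 3 * (q * a) := by linarith [hmain, hA2, hA3, hsum]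
    linarith [h9]
  rcases lt_trichotomy p 0 with hp0 | hp0 | hp0
  · have hp1 : p ≤ -1 := by omega
    have k1 : 0 ≤ (-1 - p) * v := mul_nonneg (by linarith) (by linarith)
    have k2 : 0 ≤ (-1 - q) * (N - a) → False := by
      intro k2
      linarith [k1, k2, hrpq, hA3, hu0, hv1, haN]
    have hqa : q * a ≤ -1 := by linarith [k1, hrpq, hr0, hv1]
    have hq1 : q ≤ -1 := by
      by_contra hcq
      push_neg at hcq
      have hq0 : 0 ≤ q := by omega
      have : 0 ≤ q * a := mul_nonneg hq0 (by linarith)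
      linarith
    exact k2 (mul_nonneg (by linarith) (by linarith))
  · subst hp0
    rcases lt_trichotomy q 0 with hq0 | hq0 | hq0
    · have hq1 : q ≤ -1 := by omega
      have k2 : 0 ≤ (-1 - q) * (N - a) := mul_nonneg (by linarith) (by linarith)
      linarith [k2, hrpq, hA3, hu0, haN]
    · subst hq0
      have h1 : r = 0 := by linarith [hrpq]
      have h2 : l = 0 := by linarith [hA2]
      have h3 : u = 0 := by linarith [hA3]
      linarith [hsum, hm1]
    · have hq1 : 1 ≤ q := by omega
      have k3 : 0 ≤ (q - 1) * a := mul_nonneg (by linarith) (by linarith)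
      linarith [k3, hrpq, hA2, hl0, ha1]
  · have hp1 : 1 ≤ p := by omega
    have hqa : q * a ≤ p * v - p * L := by linarith [hA2, hrpq, hl0]
    have k1 : 0 ≤ (p - 1) * (L - v) := mul_nonneg (by linarith) (by linarith)
    have hqa2 : q * a ≤ -1 := by linarith [hqa, k1, hvL]
    have hq1 : q ≤ -1 := by
      by_contra hcq
      push_neg at hcq
      have hq0 : 0 ≤ q := by omega
      have : 0 ≤ q * a := mul_nonneg hq0 (by linarith)
      linarith
    have c1 : p * (L - v) ≤ (-q) * a := by linarith [hqa]
    have c2 : (p * (L - v)) * (N - a) ≤ ((-q) * a) * (N - a) :=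
      mul_le_mul_of_nonneg_right c1 (by linarith)
    have c3 : (-q) * (N - a) ≤ p * v := by linarith [hA3, hrpq, hu0]
    have c4 : ((-q) * (N - a)) * a ≤ (p * v) * a :=
      mul_le_mul_of_nonneg_right c3 (by linarith)
    have c5 : p * (L * N - L * a - v * N) ≤ 0 := by nlinarith [c2, c4]
    have hw : 0 < L * N - L * a - v * N := by nlinarith [hbound]
    nlinarith [mul_pos hp0 hw, c5]
section Walk

/-- displacement vectors for the three descending directions -/
def dvec : Dir → ℤ × ℤ
  | Dir.U => (0, 1)
  | Dir.Lft => (-1, 0)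
  | Dir.DR => (1, -1)
  | _ => (0, 0)

/-- the edge crossed stepping from `h` in (descending) direction `d` is unoccupied -/
def unoccAt (M : Covering L N) (h : Idx L N) : Dir → Prop
  | Dir.U => M h ≠ 1
  | Dir.Lft => M (h.1 - 1, h.2) ≠ 0
  | Dir.DR => M (h.1, h.2 - 1) ≠ 2
  | _ => False

lemma red_predX (x y : ℤ) : red L N (x - 1) y = ((red L N x y).1 - 1, (red L N x y).2) := by
  unfold red
  simp only [Prod.mk.injEq]
  constructor <;> push_cast <;> rfl

lemma red_predY (x y : ℤ) : red L N x (y - 1) = ((red L N x y).1, (red L N x y).2 - 1) := by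
  unfold red
  simp only [Prod.mk.injEq]
  constructor <;> push_cast <;> rfl

lemma red_lift [NeZero L] [NeZero N] (h : Idx L N) :
    red L N (h.1.val : ℤ) (h.2.val : ℤ) = h := by
  unfold red
  rw [Prod.ext_iff]
  constructor
  · show ((h.1.val : ℤ) : ZMod L) = h.1
    rw [Int.cast_natCast]; exact ZMod.natCast_rightInverse h.1
  · show ((h.2.val : ℤ) : ZMod N) = h.2
    rw [Int.cast_natCast]; exact ZMod.natCast_rightInverse h.2

lemma phi_Up (M : Covering L N) (x y : ℤ) :
    phi M x (y + 1) = phi M x y - 1 + 3 * ind (M (red L N x y) = 1) := by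
  rw [phi_U]
  unfold incU
  ring

lemma phi_Lft [NeZero L] [NeZero N] {M : Covering L N} (hM : IsCovering M) (x y : ℤ) :
    phi M (x - 1) y = phi M x y - 1 + 3 * ind (M (red L N (x - 1) y) = 0) := by
  have h := phi_R hM (x - 1) y
  rw [sub_add_cancel] at h
  unfold incR at h
  linarith

lemma phi_DRs [NeZero L] [NeZero N] {M : Covering L N} (hM : IsCovering M) (x y : ℤ) :
    phi M (x + 1) (y - 1) = phi M x y - 1 + 3 * ind (M (red L N x (y - 1)) = 2) := by
  have h1 := phi_U M (x + 1) (y - 1)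
  rw [sub_add_cancel] at h1
  have h2 := phi_R hM x y
  have hw := white_sum hM (red L N x y)
  have e1 : ((red L N x y).1 + 1, (red L N x y).2 - 1) = red L N (x + 1) (y - 1) := by
    rw [red_succX, red_predY]
  have e2 : ((red L N x y).1, (red L N x y).2 - 1) = red L N x (y - 1) := by
    rw [red_predY]
  rw [e1, e2] at hw
  unfold incR at h2
  unfold incU at h1
  unfold ind at hw h1 h2 ⊢
  linarith

lemma phiD_div3 (M M' : Covering L N) (x y : ℤ) :
    (3 : ℤ) ∣ phi M' x y - phi M x y := by
  unfold phi
  have e : intAcc (fun s => incR M' s 0) x + intAcc (fun t => incU M' x t) y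
      - (intAcc (fun s => incR M s 0) x + intAcc (fun t => incU M x t) y)
      = intAcc (fun s => incR M' s 0 - incR M s 0) x
        + intAcc (fun t => incU M' x t - incU M x t) y := by
    rw [intAcc_sub, intAcc_sub]
    ring
  rw [e]
  apply dvd_add
  · apply intAcc_dvd
    intro i
    unfold incR
    exact ⟨ind (M (red L N i 0) = 0) - ind (M' (red L N i 0) = 0), by ring⟩
  · apply intAcc_dvd
    intro t
    unfold incU
    exact ⟨ind (M' (red L N x t) = 1) - ind (M (red L N x t) = 1), by ring⟩

lemma Dcongr [NeZero L] [NeZero N] {M M' : Covering L N} {v a : ℤ}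
    (hvM : ∀ t, rV M t = v) (haM : ∀ s, cA M s = a)
    (hvM' : ∀ t, rV M' t = v) (haM' : ∀ s, cA M' s = a)
    {x y x' y' : ℤ} (hx : (x : ZMod L) = (x' : ZMod L)) (hy : (y : ZMod N) = (y' : ZMod N)) :
    phi M' x y - phi M x y = phi M' x' y' - phi M x' y' := by
  have hdx : (L : ℤ) ∣ x' - x := by
    have := (ZMod.intCast_eq_intCast_iff _ _ _).mp hx
    exact Int.ModEq.dvd this
  have hdy : (N : ℤ) ∣ y' - y := by
    have := (ZMod.intCast_eq_intCast_iff _ _ _).mp hy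
    exact Int.ModEq.dvd this
  obtain ⟨p, hp⟩ := hdx
  obtain ⟨q, hq⟩ := hdy
  have hx' : x' = x + p * L := by linarith [hp]
  have hy' : y' = y + q * N := by linarith [hq]
  rw [hx', hy', phi_period_full hvM haM _ _ p q, phi_period_full hvM' haM' _ _ p q]
  ring

end Walk
section Walk2

/-- occupancy of the edge crossed when stepping in (descending) direction `d` from face `h` -/
def edgeOcc (M : Covering L N) (h : Idx L N) : Dir → Prop
  | Dir.U => M h = 1
  | Dir.Lft => M (h.1 - 1, h.2) = 0
  | Dir.DR => M (h.1, h.2 - 1) = 2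
  | _ => True

/-- the face reached from `h` by a (descending) step `d` -/
def redStep (h : Idx L N) (d : Dir) : Idx L N :=
  (h.1 + (((dvec d).1 : ℤ) : ZMod L), h.2 + (((dvec d).2 : ℤ) : ZMod N))

lemma red_dvec (x y : ℤ) (d : Dir) :
    red L N (x + (dvec d).1) (y + (dvec d).2) = redStep (red L N x y) d := by
  unfold red redStep
  simp only [Prod.mk.injEq]
  constructor <;> push_cast <;> rfl

lemma phi_stepE [NeZero L] [NeZero N] {M : Covering L N} (hM : IsCovering M) (x y : ℤ) (d : Dir)
    (h3 : d = Dir.U ∨ d = Dir.Lft ∨ d = Dir.DR) :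
    phi M (x + (dvec d).1) (y + (dvec d).2)
      = phi M x y - 1 + 3 * ind (edgeOcc M (red L N x y) d) := by
  rcases h3 with rfl | rfl | rfl
  · show phi M (x + 0) (y + 1) = _
    rw [add_zero, phi_Up]
    rfl
  · show phi M (x + -1) (y + 0) = _
    rw [add_zero, ← sub_eq_add_neg, phi_Lft hM, red_predX]
    rfl
  · show phi M (x + 1) (y + -1) = _
    rw [← sub_eq_add_neg, phi_DRs hM, red_predY]
    rfl

/-- lifted positions of a walk -/
def posW (start : ℤ × ℤ) (ds : ℕ → Dir) : ℕ → ℤ × ℤ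
  | 0 => start
  | n + 1 => ((posW start ds n).1 + (dvec (ds n)).1, (posW start ds n).2 + (dvec (ds n)).2)

lemma posW_zero (start : ℤ × ℤ) (ds : ℕ → Dir) : posW start ds 0 = start := rfl

lemma posW_succ (start : ℤ × ℤ) (ds : ℕ → Dir) (n : ℕ) :
    posW start ds (n + 1)
      = ((posW start ds n).1 + (dvec (ds n)).1, (posW start ds n).2 + (dvec (ds n)).2) := rfl

/-- **Key lemma**: if the height difference is not constant, some maximizer of it is a
rotatable face. -/
lemma exists_rotatable_max [NeZero L] [NeZero N] {M M' : Covering L N} {v a : ℤ}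
    (hM : IsCovering M) (hM' : IsCovering M')
    (hvM : ∀ t, rV M t = v) (haM : ∀ s, cA M s = a)
    (hvM' : ∀ t, rV M' t = v) (haM' : ∀ s, cA M' s = a)
    (hv1 : 1 ≤ v) (ha1 : 1 ≤ a)
    (hbound : (N : ℤ) * v + (L : ℤ) * a < (N : ℤ) * (L : ℤ))
    (Δ : Idx L N → ℤ)
    (hΔ : ∀ h : Idx L N,
      Δ h = phi M' (h.1.val : ℤ) (h.2.val : ℤ) - phi M (h.1.val : ℤ) (h.2.val : ℤ))
    (hnc : ∃ h₀ h₁ : Idx L N, Δ h₀ ≠ Δ h₁) :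
    ∃ g : Idx L N, RotatableAt M g ∧ ∀ h, Δ h ≤ Δ g := by
  have hL0 : (0 : ℤ) < L := by exact_mod_cast Nat.pos_of_ne_zero (NeZero.ne L)
  have hN0 : (0 : ℤ) < N := by exact_mod_cast Nat.pos_of_ne_zero (NeZero.ne N)
  have hvL : v + 1 ≤ L := by nlinarith
  have haN : a + 1 ≤ N := by nlinarith
  -- the height difference on the cover
  have hDred : ∀ x y : ℤ,
      phi M' x y - phi M x y = Δ (red L N x y) := by
    intro x y
    rw [hΔ]
    apply Dcongr hvM haM hvM' haM'
    · show (x : ZMod L) = (((red L N x y).1.val : ℤ) : ZMod L)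
      rw [Int.cast_natCast, ZMod.natCast_rightInverse (red L N x y).1]
      rfl
    · show (y : ZMod N) = (((red L N x y).2.val : ℤ) : ZMod N)
      rw [Int.cast_natCast, ZMod.natCast_rightInverse (red L N x y).2]
      rfl
  -- maximum of Δ
  have hne : (Finset.univ.image Δ).Nonempty :=
    ⟨Δ (0, 0), Finset.mem_image_of_mem _ (Finset.mem_univ _)⟩
  set mx := (Finset.univ.image Δ).max' hne with hmxdef
  have hle : ∀ h, Δ h ≤ mx :=
    fun h => Finset.le_max' _ _ (Finset.mem_image_of_mem _ (Finset.mem_univ h))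
  obtain ⟨g₀, -, hg₀⟩ := Finset.mem_image.mp ((Finset.univ.image Δ).max'_mem hne)
  by_contra hcon
  push_neg at hcon
  have hnrot : ∀ h : Idx L N, Δ h = mx → ¬ RotatableAt M h := by
    intro h hh hr
    obtain ⟨h', hh'⟩ := hcon h hr
    have := hle h'
    linarith
  -- from any maximizer we can take a descending step staying among maximizers
  have hstep' : ∀ h : Idx L N, Δ h = mx →
      ∃ d : Dir, (d = Dir.U ∨ d = Dir.Lft ∨ d = Dir.DR) ∧ ¬ edgeOcc M h d ∧
        Δ (redStep h d) = mx := by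
    intro h hh
    have hnr := hnrot h hh
    have key : ∀ d : Dir, (d = Dir.U ∨ d = Dir.Lft ∨ d = Dir.DR) → ¬ edgeOcc M h d →
        Δ (redStep h d) = mx := by
      intro d h3 hocc
      set x := (h.1.val : ℤ) with hxd
      set y := (h.2.val : ℤ) with hyd
      have hred : red L N x y = h := red_lift h
      have h1 := phi_stepE hM x y d h3
      have h2 := phi_stepE hM' x y d h3
      rw [hred] at h1 h2
      have e : Δ (redStep h d) =
          phi M' (x + (dvec d).1) (y + (dvec d).2) - phi M (x + (dvec d).1) (y + (dvec d).2) := by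
        rw [hDred, red_dvec, hred]
      have eD : phi M' x y - phi M x y = Δ h := by rw [hDred, hred]
      rw [ind_zero hocc] at h1
      have hnn := ind_nonneg (edgeOcc M' h d)
      have hub := hle (redStep h d)
      -- Δ(next) = Δ h + 3 * ind (edgeOcc M' h d) ≥ Δ h = mx, and ≤ mx
      have : Δ (redStep h d) = Δ h + 3 * ind (edgeOcc M' h d) := by
        rw [e, h1, h2]; linarith
      linarith
    by_cases c1 : M h = 1
    · by_cases c2 : M (h.1 - 1, h.2) = 0
      · by_cases c3 : M (h.1, h.2 - 1) = 2
        · exact absurd ⟨c1, c2, c3⟩ hnr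
        · exact ⟨Dir.DR, by tauto, c3, key _ (by tauto) c3⟩
      · exact ⟨Dir.Lft, by tauto, c2, key _ (by tauto) c2⟩
    · exact ⟨Dir.U, by tauto, c1, key _ (by tauto) c1⟩
  -- build the infinite descending walk among maximizers
  have hstepT : ∀ t : {h : Idx L N // Δ h = mx}, ∃ d : Dir,
      (d = Dir.U ∨ d = Dir.Lft ∨ d = Dir.DR) ∧ ¬ edgeOcc M t.1 d ∧ Δ (redStep t.1 d) = mx :=
    fun t => hstep' t.1 t.2
  choose df h3f hunf hmf using hstepT
  set stepT : {h : Idx L N // Δ h = mx} → {h : Idx L N // Δ h = mx} :=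
    fun t => ⟨redStep t.1 (df t), hmf t⟩ with hstepTdef
  set wk : ℕ → {h : Idx L N // Δ h = mx} := fun n => stepT^[n] ⟨g₀, hg₀⟩ with hwkdef
  have wk_succ : ∀ n, wk (n + 1) = stepT (wk n) := by
    intro n
    rw [hwkdef]
    exact Function.iterate_succ_apply' stepT n _
  set dir : ℕ → Dir := fun n => df (wk n) with hdirdef
  set start : ℤ × ℤ := ((g₀.1.val : ℤ), (g₀.2.val : ℤ)) with hstartdef
  set P : ℕ → ℤ × ℤ := posW start dir with hPdef
  have hredP : ∀ n, red L N (P n).1 (P n).2 = (wk n).1 := by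
    intro n
    induction n with
    | zero =>
        show red L N (g₀.1.val : ℤ) (g₀.2.val : ℤ) = g₀
        exact red_lift g₀
    | succ k ih =>
        have : P (k + 1) = ((P k).1 + (dvec (dir k)).1, (P k).2 + (dvec (dir k)).2) :=
          posW_succ start dir k
        rw [this]
        show red L N ((P k).1 + (dvec (dir k)).1) ((P k).2 + (dvec (dir k)).2) = _
        rw [red_dvec, ih, wk_succ]
  have hphiP : ∀ n, phi M (P n).1 (P n).2 = phi M start.1 start.2 - n := by
    intro n
    induction n with
    | zero => simp [hPdef, posW_zero]
    | succ k ih =>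
        have hP : P (k + 1) = ((P k).1 + (dvec (dir k)).1, (P k).2 + (dvec (dir k)).2) :=
          posW_succ start dir k
        rw [hP]
        have := phi_stepE hM (P k).1 (P k).2 (dir k) (h3f (wk k))
        rw [hredP k] at this
        rw [ind_zero (hunf (wk k))] at this
        show phi M ((P k).1 + (dvec (dir k)).1) ((P k).2 + (dvec (dir k)).2) = _
        rw [this, ih]
        push_cast
        ring
  -- pigeonhole: the walk repeats
  have main : ∀ i j : ℕ, i < j → wk i = wk j → False := by
    intro i j hij heq
    set S := Finset.Ico i j with hS
    set u := ∑ k ∈ S, ind (dir k = Dir.U) with hu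
    set l := ∑ k ∈ S, ind (dir k = Dir.Lft) with hl
    set r := ∑ k ∈ S, ind (dir k = Dir.DR) with hr'
    have hu0 : 0 ≤ u := Finset.sum_nonneg fun k _ => ind_nonneg _
    have hl0 : 0 ≤ l := Finset.sum_nonneg fun k _ => ind_nonneg _
    have hr0 : 0 ≤ r := Finset.sum_nonneg fun k _ => ind_nonneg _
    have hsum1 : u + l + r = ((j : ℤ) - i) := by
      rw [hu, hl, hr', ← Finset.sum_add_distrib, ← Finset.sum_add_distrib]
      have : ∀ k ∈ S, ind (dir k = Dir.U) + ind (dir k = Dir.Lft) + ind (dir k = Dir.DR)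
          = 1 := by
        intro k _
        rcases h3f (wk k) with h | h | h <;> rw [show dir k = df (wk k) from rfl, h] <;>
          simp [ind]
      rw [Finset.sum_congr rfl this]
      simp [hS, Nat.cast_sub (le_of_lt hij)]
    have hgen1 : ∀ n, (P n).1 = start.1 + ∑ k ∈ Finset.range n, (dvec (dir k)).1 := by
      intro n
      induction n with
      | zero => simp [hPdef, posW_zero]
      | succ m ih =>
          rw [show P (m + 1) = ((P m).1 + (dvec (dir m)).1, (P m).2 + (dvec (dir m)).2) from
            posW_succ start dir m]
          rw [Finset.sum_range_succ]
          show (P m).1 + (dvec (dir m)).1 = _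
          rw [ih]
          ring
    have hgen2 : ∀ n, (P n).2 = start.2 + ∑ k ∈ Finset.range n, (dvec (dir k)).2 := by
      intro n
      induction n with
      | zero => simp [hPdef, posW_zero]
      | succ m ih =>
          rw [show P (m + 1) = ((P m).1 + (dvec (dir m)).1, (P m).2 + (dvec (dir m)).2) from
            posW_succ start dir m]
          rw [Finset.sum_range_succ]
          show (P m).2 + (dvec (dir m)).2 = _
          rw [ih]
          ring
    have hX : (P j).1 - (P i).1 = r - l := by
      rw [hgen1 i, hgen1 j]
      have e : ∑ k ∈ Finset.range j, (dvec (dir k)).1 - ∑ k ∈ Finset.range i, (dvec (dir k)).1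
          = ∑ k ∈ S, (dvec (dir k)).1 := (Finset.sum_Ico_eq_sub _ (le_of_lt hij)).symm
      have e2 : ∑ k ∈ S, (dvec (dir k)).1
          = ∑ k ∈ S, (ind (dir k = Dir.DR) - ind (dir k = Dir.Lft)) := by
        apply Finset.sum_congr rfl
        intro k _
        rcases h3f (wk k) with h | h | h <;> rw [show dir k = df (wk k) from rfl, h] <;>
          simp [ind, dvec]
      rw [show start.1 + ∑ k ∈ Finset.range j, (dvec (dir k)).1
          - (start.1 + ∑ k ∈ Finset.range i, (dvec (dir k)).1)
          = ∑ k ∈ Finset.range j, (dvec (dir k)).1 - ∑ k ∈ Finset.range i, (dvec (dir k)).1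
          by ring, e, e2, Finset.sum_sub_distrib]
    have hY : (P j).2 - (P i).2 = u - r := by
      rw [hgen2 i, hgen2 j]
      have e : ∑ k ∈ Finset.range j, (dvec (dir k)).2 - ∑ k ∈ Finset.range i, (dvec (dir k)).2
          = ∑ k ∈ S, (dvec (dir k)).2 := (Finset.sum_Ico_eq_sub _ (le_of_lt hij)).symm
      have e2 : ∑ k ∈ S, (dvec (dir k)).2
          = ∑ k ∈ S, (ind (dir k = Dir.U) - ind (dir k = Dir.DR)) := by
        apply Finset.sum_congr rfl
        intro k _
        rcases h3f (wk k) with h | h | h <;> rw [show dir k = df (wk k) from rfl, h] <;>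
          simp [ind, dvec]
      rw [show start.2 + ∑ k ∈ Finset.range j, (dvec (dir k)).2
          - (start.2 + ∑ k ∈ Finset.range i, (dvec (dir k)).2)
          = ∑ k ∈ Finset.range j, (dvec (dir k)).2 - ∑ k ∈ Finset.range i, (dvec (dir k)).2
          by ring, e, e2, Finset.sum_sub_distrib]
    -- congruences from the walk returning to the same face
    have hredij : red L N (P i).1 (P i).2 = red L N (P j).1 (P j).2 := by
      rw [hredP i, hredP j, heq]
    have hdvd1 : (L : ℤ) ∣ (P j).1 - (P i).1 := by
      have := congrArg Prod.fst hredij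
      unfold red at this
      simp only at this
      exact Int.ModEq.dvd ((ZMod.intCast_eq_intCast_iff _ _ _).mp this)
    have hdvd2 : (N : ℤ) ∣ (P j).2 - (P i).2 := by
      have := congrArg Prod.snd hredij
      unfold red at this
      simp only at this
      exact Int.ModEq.dvd ((ZMod.intCast_eq_intCast_iff _ _ _).mp this)
    obtain ⟨p, hp⟩ := hdvd1
    obtain ⟨q, hq⟩ := hdvd2
    -- height decrement vs periodicity
    have hphi_ij : phi M (P j).1 (P j).2 = phi M (P i).1 (P i).2 - ((j : ℤ) - i) := by
      rw [hphiP i, hphiP j]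
      ring
    have e1 : (P j).1 = (P i).1 + p * L := by linarith [hp]
    have e2 : (P j).2 = (P i).2 + q * N := by linarith [hq]
    have hper : phi M (P j).1 (P j).2
        = phi M (P i).1 (P i).2 + p * ((L : ℤ) - 3 * v) + q * (3 * a - (N : ℤ)) := by
      rw [e1, e2]
      exact phi_period_full hvM haM _ _ p q
    have hmain : -((j : ℤ) - i) = p * ((L : ℤ) - 3 * v) + q * (3 * a - (N : ℤ)) := by
      linarith
    have hA2 : r - l = p * L := by rw [← hX, hp]; ring
    have hA3 : u - r = q * N := by rw [← hY, hq]; ring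
    have hm1 : (1 : ℤ) ≤ (j : ℤ) - i := by
      have : (i : ℤ) < j := by exact_mod_cast hij
      linarith
    exact int_walk_contra (L : ℤ) (N : ℤ) v a u l r p q ((j : ℤ) - i)
      hv1 ha1 hvL haN hbound hu0 hl0 hr0 hm1 hsum1 hA2 hA3 hmain
  obtain ⟨i, j, hij, heq⟩ := Finite.exists_ne_map_eq_of_infinite wk
  rcases lt_or_gt_of_ne hij with h | h
  · exact main i j h heq
  · exact main j i h heq.symm

end Walk2
section Assembly

/-- height difference function on the torus -/
def Del [NeZero L] [NeZero N] (M M' : Covering L N) (h : Idx L N) : ℤ :=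
  phi M' (h.1.val : ℤ) (h.2.val : ℤ) - phi M (h.1.val : ℤ) (h.2.val : ℤ)

lemma Del_nonempty [NeZero L] [NeZero N] (M M' : Covering L N) :
    (Finset.univ.image (Del M M')).Nonempty :=
  ⟨Del M M' (0, 0), Finset.mem_image_of_mem _ (Finset.mem_univ _)⟩

/-- minimum of the height difference -/
def minDel [NeZero L] [NeZero N] (M M' : Covering L N) : ℤ :=
  (Finset.univ.image (Del M M')).min' (Del_nonempty M M')

/-- total excess of the height difference over its minimum -/
def muZ [NeZero L] [NeZero N] (M M' : Covering L N) : ℤ :=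
  ∑ h : Idx L N, (Del M M' h - minDel M M')

/-- the natural-number measure for the induction -/
def mu [NeZero L] [NeZero N] (M M' : Covering L N) : ℕ := (muZ M M').toNat

lemma minDel_le [NeZero L] [NeZero N] (M M' : Covering L N) (h : Idx L N) :
    minDel M M' ≤ Del M M' h :=
  Finset.min'_le _ _ (Finset.mem_image_of_mem _ (Finset.mem_univ h))

lemma minDel_attained [NeZero L] [NeZero N] (M M' : Covering L N) :
    ∃ h, Del M M' h = minDel M M' := by
  obtain ⟨h, -, hh⟩ := Finset.mem_image.mp ((Finset.univ.image (Del M M')).min'_mem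
    (Del_nonempty M M'))
  exact ⟨h, hh⟩

lemma muZ_nonneg [NeZero L] [NeZero N] (M M' : Covering L N) : 0 ≤ muZ M M' :=
  Finset.sum_nonneg fun h _ => sub_nonneg.mpr (minDel_le M M' h)

lemma ind_eq_iff {P Q : Prop} (h : ind P = ind Q) : P ↔ Q := by
  unfold ind at h
  split_ifs at h with h1 h2 h2 <;> try norm_num at h
  · exact iff_of_true h1 h2
  · exact iff_of_false h1 h2

lemma fin3_eq_of_iff {x y : Fin 3} (h0 : (x = 0 ↔ y = 0)) (h1 : (x = 1 ↔ y = 1)) : x = y := by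
  rcases fin3 x with h | h | h <;> rcases fin3 y with h' | h' | h' <;> subst h <;> subst h' <;>
    simp_all

/-- the `Del` version of `Dcongr` -/
lemma Dred [NeZero L] [NeZero N] {M M' : Covering L N} {v a : ℤ}
    (hvM : ∀ t, rV M t = v) (haM : ∀ s, cA M s = a)
    (hvM' : ∀ t, rV M' t = v) (haM' : ∀ s, cA M' s = a) (x y : ℤ) :
    phi M' x y - phi M x y = Del M M' (red L N x y) := by
  unfold Del
  apply Dcongr hvM haM hvM' haM'
  · show (x : ZMod L) = (((red L N x y).1.val : ℤ) : ZMod L)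
    rw [Int.cast_natCast, ZMod.natCast_rightInverse (red L N x y).1]
    rfl
  · show (y : ZMod N) = (((red L N x y).2.val : ℤ) : ZMod N)
    rw [Int.cast_natCast, ZMod.natCast_rightInverse (red L N x y).2]
    rfl

/-- a constant height difference forces equality of coverings -/
lemma Del_const_eq [NeZero L] [NeZero N] {M M' : Covering L N} {v a : ℤ}
    (hM : IsCovering M) (hM' : IsCovering M')
    (hvM : ∀ t, rV M t = v) (haM : ∀ s, cA M s = a)
    (hvM' : ∀ t, rV M' t = v) (haM' : ∀ s, cA M' s = a)
    (hcst : ∀ h h' : Idx L N, Del M M' h = Del M M' h') : M = M' := by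
  funext b
  set x := (b.1.val : ℤ) with hxd
  set y := (b.2.val : ℤ) with hyd
  have hred : red L N x y = b := red_lift b
  have hconst : ∀ x' y' : ℤ, phi M' x' y' - phi M x' y' = phi M' x y - phi M x y := by
    intro x' y'
    rw [Dred hvM haM hvM' haM' x' y', Dred hvM haM hvM' haM' x y]
    exact hcst _ _
  have h0 : ind (M' b = 0) = ind (M b = 0) := by
    have e1 := phi_R hM x y
    have e2 := phi_R hM' x y
    have e3 := hconst (x + 1) y
    unfold incR at e1 e2
    rw [hred] at e1 e2
    linarith
  have h1 : ind (M' b = 1) = ind (M b = 1) := by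
    have e1 := phi_U M x y
    have e2 := phi_U M' x y
    have e3 := hconst x (y + 1)
    unfold incU at e1 e2
    rw [hred] at e1 e2
    linarith
  exact fin3_eq_of_iff (ind_eq_iff h0.symm) (ind_eq_iff h1.symm)

lemma sum_ind_eq_one [NeZero L] [NeZero N] (g : Idx L N) :
    ∑ h : Idx L N, ind (h = g) = 1 := by
  rw [Finset.sum_eq_single g (fun b _ hb => ind_zero hb)
    (fun hg => absurd (Finset.mem_univ g) hg)]
  exact ind_one rfl

lemma Del_div3 [NeZero L] [NeZero N] (M M' : Covering L N) (h h' : Idx L N) :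
    (3 : ℤ) ∣ Del M M' h - Del M M' h' :=
  dvd_sub (phiD_div3 M M' _ _) (phiD_div3 M M' _ _)

end Assembly
section MainProof

lemma reach_aux [NeZero L] [NeZero N] {n1 n2 : ℕ} (hn1 : 0 < n1) (hn2 : 0 < n2)
    (hn : n1 + n2 < N * L) {η' : Covering L N} (hη' : η' ∈ Omega L N n1 n2) :
    ∀ (k : ℕ) (M : Covering L N), M ∈ Omega L N n1 n2 → mu M η' ≤ k →
      Relation.ReflTransGen (ElemMove L N n1 n2) M η' := by
  intro k
  induction k using Nat.strong_induction_on with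
  | _ k IH =>
    intro M hM hk
    have hMc : IsCovering M := hM.1
    have hMn1 : nVert M = n1 := hM.2.1
    have hMn2 : nNW M = n2 := hM.2.2
    have hc' : IsCovering η' := hη'.1
    have hn1' : nVert η' = n1 := hη'.2.1
    have hn2' : nNW η' = n2 := hη'.2.2
    have hL0 : (0 : ℤ) < L := by exact_mod_cast Nat.pos_of_ne_zero (NeZero.ne L)
    have hN0 : (0 : ℤ) < N := by exact_mod_cast Nat.pos_of_ne_zero (NeZero.ne N)
    set v := rV M 0 with hvdef
    set a := cA M 0 with hadef
    have hvM : ∀ t, rV M t = v := fun t => rV_const hMc t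
    have haM : ∀ s, cA M s = a := fun s => cA_const hMc s
    have hNv : (N : ℤ) * v = (n1 : ℤ) := by
      have := rV_total hMc
      rw [hMn1] at this
      exact this
    have hLa : (L : ℤ) * a = (n2 : ℤ) := by
      have := cA_total hMc
      rw [hMn2] at this
      exact this
    have hNne : (N : ℤ) ≠ 0 := ne_of_gt hN0
    have hLne : (L : ℤ) ≠ 0 := ne_of_gt hL0
    have hvM' : ∀ t, rV η' t = v := by
      have h1 := rV_total hc'
      rw [hn1'] at h1
      have h2 : rV η' 0 = v := by
        apply mul_left_cancel₀ hNne
        rw [h1, hNv]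
      intro t
      rw [rV_const hc' t, h2]
    have haM' : ∀ s, cA η' s = a := by
      have h1 := cA_total hc'
      rw [hn2'] at h1
      have h2 : cA η' 0 = a := by
        apply mul_left_cancel₀ hLne
        rw [h1, hLa]
      intro s
      rw [cA_const hc' s, h2]
    have hn1z : (1 : ℤ) ≤ (n1 : ℤ) := by exact_mod_cast hn1
    have hn2z : (1 : ℤ) ≤ (n2 : ℤ) := by exact_mod_cast hn2
    have hv1 : 1 ≤ v := by nlinarith
    have ha1 : 1 ≤ a := by nlinarith
    have hbound : (N : ℤ) * v + (L : ℤ) * a < (N : ℤ) * (L : ℤ) := by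
      rw [hNv, hLa]
      exact_mod_cast hn
    have hvL : v + 1 ≤ L := by nlinarith
    have haN : a + 1 ≤ N := by nlinarith
    have hL2 : 1 < L := by
      have : (1 : ℤ) < (L : ℤ) := by linarith
      exact_mod_cast this
    have hN2 : 1 < N := by
      have : (1 : ℤ) < (N : ℤ) := by linarith
      exact_mod_cast this
    haveI : Fact (1 < L) := ⟨hL2⟩
    haveI : Fact (1 < N) := ⟨hN2⟩
    have h1L : (1 : ZMod L) ≠ 0 := one_ne_zero
    have h1N : (1 : ZMod N) ≠ 0 := one_ne_zero
    by_cases hcst : ∀ h h' : Idx L N, Del M η' h = Del M η' h'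
    · rw [Del_const_eq hMc hc' hvM haM hvM' haM' hcst]
    · push_neg at hcst
      obtain ⟨h₀, h₁, hne01⟩ := hcst
      obtain ⟨g, hrot, hmax⟩ := exists_rotatable_max hMc hc' hvM haM hvM' haM' hv1 ha1 hbound
        (Del M η') (fun h => rfl) ⟨h₀, h₁, hne01⟩
      set M₁ := rotate M g with hM₁def
      have hM₁Ω : M₁ ∈ Omega L N n1 n2 := rotate_mem_Omega hM hrot h1L h1N
      obtain ⟨c, hc⟩ := rotate_phi hMc hM₁Ω.1 hrot h1L h1N
      have hDel1 : ∀ h : Idx L N, Del M₁ η' h = Del M η' h - 3 * ind (h = g) - c := by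
        intro h
        unfold Del
        rw [hc, red_lift h]
        ring
      set mn := minDel M η' with hmndef
      have hge : ∀ h, mn ≤ Del M η' h := minDel_le M η'
      obtain ⟨hm, hhm⟩ := minDel_attained M η'
      rw [← hmndef] at hhm
      have hgap : mn + 3 ≤ Del M η' g := by
        have hlt : mn < Del M η' g := by
          rcases lt_or_ge mn (Del M η' g) with h | h
          · exact h
          · exfalso
            have hall : ∀ h', Del M η' h' = mn :=
              fun h' => le_antisymm (le_trans (hmax h') h) (hge h')
            exact hne01 ((hall h₀).trans (hall h₁).symm)
        have hd : (3 : ℤ) ∣ Del M η' g - mn := by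
          rw [← hhm]
          exact Del_div3 M η' g hm
        linarith [Int.le_of_dvd (by linarith) hd]
      have hgne : hm ≠ g := by
        intro e
        rw [e] at hhm
        linarith
      have hminD : minDel M₁ η' = mn - c := by
        apply le_antisymm
        · have hval : Del M₁ η' hm = mn - c := by
            rw [hDel1, hhm, ind_zero hgne]
            ring
          rw [← hval]
          exact minDel_le M₁ η' hm
        · apply Finset.le_min'
          intro val hval
          obtain ⟨h, -, rfl⟩ := Finset.mem_image.mp hval
          rw [hDel1]
          by_cases e : h = g
          · rw [e, ind_one rfl]
            linarith [hgap]
          · rw [ind_zero e]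
            linarith [hge h]
      have hmuZ1 : muZ M₁ η' = muZ M η' - 3 := by
        unfold muZ
        rw [hminD]
        have e : ∀ h : Idx L N, Del M₁ η' h - (mn - c)
            = (Del M η' h - mn) - 3 * ind (h = g) := by
          intro h
          rw [hDel1 h]
          ring
        rw [Finset.sum_congr rfl (fun h _ => e h), Finset.sum_sub_distrib,
          ← Finset.mul_sum, sum_ind_eq_one g]
        ring
      have hmu3 : 3 ≤ muZ M η' := by
        have h5 := Finset.single_le_sum (f := fun h => Del M η' h - mn)
          (fun i _ => sub_nonneg.mpr (hge i)) (Finset.mem_univ g)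
        have h5' : Del M η' g - mn ≤ ∑ h : Idx L N, (Del M η' h - mn) := h5
        have e8 : muZ M η' = ∑ h : Idx L N, (Del M η' h - mn) := rfl
        rw [e8]
        linarith [hgap, h5']
      have hstep : mu M₁ η' < k := by
        have h6 := muZ_nonneg M₁ η'
        have h7 := muZ_nonneg M η'
        unfold mu at hk ⊢
        omega
      exact Relation.ReflTransGen.head ⟨hM, hM₁Ω, g, hrot, rfl⟩
        (IH (mu M₁ η') hstep M₁ hM₁Ω le_rfl)

end MainProof

/-- The periodized `q`-Whittaker Markov chain is irreducible on
`Ω_{L,N;n₁,n₂}`: any covering `η` can be taken to any covering `η'` by a finite chain of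
elementary moves, each shifting a single vertical dimer by `+e₁` (a rotation of the three
dimers around one hexagonal face), while remaining inside `Ω_{L,N;n₁,n₂}`. -/
theorem irreducible_on_Omega
    {L N : ℕ} [NeZero L] [NeZero N]
    (n1 n2 : ℕ) (hn1 : 0 < n1) (hn2 : 0 < n2) (hn : n1 + n2 < N * L)
    (η η' : Covering L N) (hη : η ∈ Omega L N n1 n2) (hη' : η' ∈ Omega L N n1 n2) :
    Relation.ReflTransGen (ElemMove L N n1 n2) η η' :=
  reach_aux hn1 hn2 hn hη' (mu η η') η hη le_rfl

end HexDimers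
end
end

section
/- Let η ∈ Ω_{L,N;n1,n2} (so n1 > 0, n2 > 0 and NL − n1 − n2 > 0) and let f be any face. Construct a path of faces f = f_0, f_1, f_2, … by the rule that the edge traversed from f_i to f_{i+1} is not occupied by a dimer of η and has the white vertex on its left. Then this path cannot contain a closed loop; consequently it terminates after a finite number of steps at a face at which all three edges with the white vertex on the left are occupied in η. -/
/-!
Dimer coverings (perfect matchings) of the hexagonal lattice `Λ_{L,N}` periodized with
period `L` in the `e₁` direction and period `N` in the `e₂` direction
(Corwin–Toninelli, "A (2+1)-dimensional growth process with explicit stationary measures").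

Black vertices, white vertices and hexagonal faces are all indexed by
`(ℤ/Lℤ) × (ℤ/Nℤ)`.  The edge of type `j ∈ {0,1,2}` at the black vertex `b = (s,t)` joins
`b` to the white vertex `whiteEnd b j`; type `0` edges are the vertical ones ("particles"),
type `1` edges are the north-west oriented ones, type `2` edges are the remaining
(horizontal) ones.  A face `g = (s,t)` is bordered by the six edges
`(s,t,0), (s-1,t,0), (s,t,1), (s,t-1,1), (s-1,t,2), (s,t-1,2)`; stepping from a face to an
adjacent face in direction `+e₁` crosses a vertical edge with the white vertex on the
right, stepping in direction `+e₂` crosses a north-west edge with the white vertex on the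
left.
-/

open scoped Classical

noncomputable section

namespace HexDimers

variable {L N : ℕ}

/-- One step of the path construction of Lemma 2 (`lemma:loop`): from the face `g` one
moves to an adjacent face `g'` across an edge that is *not* occupied in `M` and has the
white vertex on the left. -/
def WhiteLeftStep (M : Covering L N) (g g' : Idx L N) : Prop :=
  ∃ d : Dir, crossSign d = -1 ∧ g' = nextFace g d ∧ ¬ occupiedEdge M (crossEdge g d)

/-! ### Auxiliary machinery: an integer height function on the universal cover `ℤ × ℤ`. -/

section Aux

variable [NeZero L] [NeZero N]

lemma fin3_cases (v : Fin 3) : v = 0 ∨ v = 1 ∨ v = 2 := by revert v; decide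

lemma crossSign_neg_iff (d : Dir) : crossSign d = -1 ↔ d = .Lft ∨ d = .U ∨ d = .DR := by
  cases d <;> simp [crossSign]

/-- Indicator (in `ℤ`) of an edge being occupied. -/
def eInd (η : Covering L N) (e : Idx L N × Fin 3) : ℤ :=
  if occupiedEdge η e then 1 else 0

/-- The height increment across the edge crossed from the face `g` in direction `d`. -/
def Wf (η : Covering L N) (g : Idx L N) (d : Dir) : ℤ :=
  crossSign d * (3 * eInd η (crossEdge g d) - 1)

/-- Projection from the universal cover `ℤ × ℤ` to the faces of the torus. -/
def pr (z : ℤ × ℤ) : Idx L N := ((z.1 : ZMod L), (z.2 : ZMod N))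

/-- Height increment, read on the universal cover. -/
def Wz (η : Covering L N) (z : ℤ × ℤ) (d : Dir) : ℤ := Wf η (pr z) d

/-- Moving on the universal cover. -/
def mvZ (z : ℤ × ℤ) : Dir → ℤ × ℤ
  | .R => (z.1 + 1, z.2)
  | .Lft => (z.1 - 1, z.2)
  | .U => (z.1, z.2 + 1)
  | .D => (z.1, z.2 - 1)
  | .UL => (z.1 - 1, z.2 + 1)
  | .DR => (z.1 + 1, z.2 - 1)

lemma pr_mv (z : ℤ × ℤ) (d : Dir) :
    (pr (mvZ z d) : Idx L N) = nextFace (pr z) d := by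
  obtain ⟨x, y⟩ := z
  cases d <;> simp [pr, mvZ, nextFace, Prod.ext_iff] <;> push_cast <;> simp

/-- Signed sum of `f` over the integer interval between `0` and `x`. -/
def fsum (f : ℤ → ℤ) (x : ℤ) : ℤ :=
  (∑ i ∈ Finset.range x.toNat, f i) - ∑ i ∈ Finset.range (-x).toNat, f (-(i + 1 : ℕ))

lemma fsum_zero (f : ℤ → ℤ) : fsum f 0 = 0 := by simp [fsum]

lemma fsum_natCast (f : ℤ → ℤ) (n : ℕ) :
    fsum f n = ∑ i ∈ Finset.range n, f i := by
  have h2 : ((n : ℤ)).toNat = n := by omega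
  have h3 : (-(n : ℤ)).toNat = 0 := by omega
  simp [fsum, h2, h3]

lemma fsum_succ (f : ℤ → ℤ) (x : ℤ) : fsum f (x + 1) = fsum f x + f x := by
  rcases le_or_gt 0 x with hx | hx
  · obtain ⟨m, rfl⟩ := Int.eq_ofNat_of_zero_le hx
    rw [show ((m : ℤ) + 1) = ((m + 1 : ℕ) : ℤ) by push_cast; ring,
      fsum_natCast, fsum_natCast, Finset.sum_range_succ]
  · obtain ⟨m, rfl⟩ : ∃ m : ℕ, x = -((m : ℤ) + 1) := ⟨(-(x + 1)).toNat, by omega⟩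
    have h1 : (-((m : ℤ) + 1) + 1).toNat = 0 := by omega
    have h2 : (-((m : ℤ) + 1)).toNat = 0 := by omega
    have h3 : (- -((m : ℤ) + 1)).toNat = m + 1 := by omega
    have h4 : (-(-((m : ℤ) + 1) + 1)).toNat = m := by omega
    simp only [fsum, h1, h2, h3, h4, Finset.sum_range_succ, Finset.range_zero,
      Finset.sum_empty]
    push_cast
    ring

/-- The height function on the universal cover. -/
def hfun (η : Covering L N) (z : ℤ × ℤ) : ℤ :=
  fsum (fun t => Wz η (t, 0) .R) z.1 + fsum (fun t => Wz η (z.1, t) .U) z.2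

lemma hfun_zero (η : Covering L N) : hfun η (0, 0) = 0 := by simp [hfun, fsum_zero]

/-- Around each black vertex, exactly one edge is occupied. -/
lemma black_one (η : Covering L N) (b : Idx L N) :
    eInd η (b, 0) + eInd η (b, 1) + eInd η (b, 2) = 1 := by
  unfold eInd occupiedEdge
  rcases fin3_cases (η b) with h | h | h <;> simp [h]

/-- In a perfect matching, each white vertex is covered exactly once. -/
lemma white_one (η : Covering L N) (hc : IsCovering η) (w : Idx L N) :
    eInd η ((w.1, w.2), 0) + eInd η ((w.1 + 1, w.2 - 1), 1) + eInd η ((w.1, w.2 - 1), 2)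
      = 1 := by
  have hwe0 : ∀ b : Idx L N, whiteEnd b 0 = b := fun b => rfl
  have hwe1 : ∀ b : Idx L N, whiteEnd b 1 = (b.1 - 1, b.2 + 1) := fun b => rfl
  have hwe2 : ∀ b : Idx L N, whiteEnd b 2 = (b.1, b.2 + 1) := fun b => rfl
  have he0 : whiteEnd (L := L) (N := N) (w.1, w.2) 0 = (w.1, w.2) := rfl
  have he1 : whiteEnd (L := L) (N := N) (w.1 + 1, w.2 - 1) 1 = (w.1, w.2) := by
    rw [hwe1]; exact Prod.ext (by ring) (by ring)
  have he2 : whiteEnd (L := L) (N := N) (w.1, w.2 - 1) 2 = (w.1, w.2) := by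
    rw [hwe2]; exact Prod.ext (by ring) (by ring)
  have uniq : ∀ b b' : Idx L N, whiteEnd b (η b) = whiteEnd b' (η b') → b = b' :=
    fun b b' h => hc h
  have h01 : ¬ (η (w.1, w.2) = 0 ∧ η (w.1 + 1, w.2 - 1) = 1) := by
    rintro ⟨h0, h1⟩
    have he : whiteEnd (L := L) (N := N) (w.1, w.2) (η (w.1, w.2))
        = whiteEnd (w.1 + 1, w.2 - 1) (η (w.1 + 1, w.2 - 1)) := by
      rw [h0, h1, he0, he1]
    have hbb := uniq _ _ he
    rw [← hbb, h0] at h1; exact absurd h1 (by decide)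
  have h02 : ¬ (η (w.1, w.2) = 0 ∧ η (w.1, w.2 - 1) = 2) := by
    rintro ⟨h0, h1⟩
    have he : whiteEnd (L := L) (N := N) (w.1, w.2) (η (w.1, w.2))
        = whiteEnd (w.1, w.2 - 1) (η (w.1, w.2 - 1)) := by
      rw [h0, h1, he0, he2]
    have hbb := uniq _ _ he
    rw [← hbb, h0] at h1; exact absurd h1 (by decide)
  have h12 : ¬ (η (w.1 + 1, w.2 - 1) = 1 ∧ η (w.1, w.2 - 1) = 2) := by
    rintro ⟨h0, h1⟩
    have he : whiteEnd (L := L) (N := N) (w.1 + 1, w.2 - 1) (η (w.1 + 1, w.2 - 1))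
        = whiteEnd (w.1, w.2 - 1) (η (w.1, w.2 - 1)) := by
      rw [h0, h1, he1, he2]
    have hbb := uniq _ _ he
    rw [← hbb, h0] at h1; exact absurd h1 (by decide)
  have hsurj : Function.Surjective (fun b : Idx L N => whiteEnd b (η b)) :=
    Finite.surjective_of_injective hc
  obtain ⟨b, hb⟩ := hsurj (w.1, w.2)
  have hb' : whiteEnd b (η b) = (w.1, w.2) := hb
  have hex : η (w.1, w.2) = 0 ∨ η (w.1 + 1, w.2 - 1) = 1 ∨ η (w.1, w.2 - 1) = 2 := by
    rcases fin3_cases (η b) with h | h | h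
    · left
      rw [h, hwe0] at hb'
      rw [hb'] at h; exact h
    · right; left
      rw [h, hwe1] at hb'
      obtain ⟨h1, h2⟩ := Prod.ext_iff.mp hb'
      have hbeq : b = (w.1 + 1, w.2 - 1) :=
        Prod.ext (by dsimp at h1 ⊢; linear_combination h1) (by dsimp at h2 ⊢; linear_combination h2)
      rw [hbeq] at h; exact h
    · right; right
      rw [h, hwe2] at hb'
      obtain ⟨h1, h2⟩ := Prod.ext_iff.mp hb'
      have hbeq : b = (w.1, w.2 - 1) :=
        Prod.ext (by dsimp at h1 ⊢; linear_combination h1) (by dsimp at h2 ⊢; linear_combination h2)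
      rw [hbeq] at h; exact h
  unfold eInd occupiedEdge
  rcases hex with h | h | h
  · have n1 : ¬ η (w.1 + 1, w.2 - 1) = 1 := fun hx => h01 ⟨h, hx⟩
    have n2 : ¬ η (w.1, w.2 - 1) = 2 := fun hx => h02 ⟨h, hx⟩
    simp [h, n1, n2]
  · have n1 : ¬ η (w.1, w.2) = 0 := fun hx => h01 ⟨hx, h⟩
    have n2 : ¬ η (w.1, w.2 - 1) = 2 := fun hx => h12 ⟨h, hx⟩
    simp [h, n1, n2]
  · have n1 : ¬ η (w.1, w.2) = 0 := fun hx => h02 ⟨hx, h⟩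
    have n2 : ¬ η (w.1 + 1, w.2 - 1) = 1 := fun hx => h12 ⟨hx, h⟩
    simp [h, n1, n2]


/-! ### Triangle relations and the height-step property -/

lemma triB (η : Covering L N) (x y : ℤ) :
    Wz η (x, y) .R + Wz η (x + 1, y) .UL + Wz η (x, y + 1) .D = 0 := by
  have hb := black_one η ((x : ZMod L), (y : ZMod N))
  simp only [Wz, Wf, pr, crossEdge, crossSign]
  push_cast
  simp only [add_sub_cancel_right]
  linarith [hb]

lemma triW (η : Covering L N) (hc : IsCovering η) (x y : ℤ) :
    Wz η (x, y + 1) .R + Wz η (x + 1, y + 1) .D + Wz η (x + 1, y) .UL = 0 := by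
  have hw := white_one η hc ((x : ZMod L), (y : ZMod N) + 1)
  simp only [Wz, Wf, pr, crossEdge, crossSign]
  push_cast
  simp only [add_sub_cancel_right] at hw ⊢
  linarith [hw]

lemma invUD (η : Covering L N) (x y : ℤ) : Wz η (x, y + 1) .D = - Wz η (x, y) .U := by
  simp only [Wz, Wf, pr, crossEdge, crossSign]
  push_cast
  simp only [add_sub_cancel_right]
  ring

lemma invRL (η : Covering L N) (x y : ℤ) : Wz η (x - 1, y) .R = - Wz η (x, y) .Lft := by
  simp only [Wz, Wf, pr, crossEdge, crossSign]
  push_cast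
  ring

lemma invULDR (η : Covering L N) (x y : ℤ) :
    Wz η (x + 1, y - 1) .UL = - Wz η (x, y) .DR := by
  simp only [Wz, Wf, pr, crossEdge, crossSign]
  push_cast
  simp only [add_sub_cancel_right]
  ring

lemma square (η : Covering L N) (hc : IsCovering η) (x y : ℤ) :
    Wz η (x, y) .R + Wz η (x + 1, y) .U = Wz η (x, y) .U + Wz η (x, y + 1) .R := by
  have t1 := triB η x y
  have t2 := triW η hc x y
  have i1 := invUD η x y
  have i2 := invUD η (x + 1) y
  linarith

lemma hstep_U (η : Covering L N) (x y : ℤ) :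
    hfun η (x, y + 1) = hfun η (x, y) + Wz η (x, y) .U := by
  simp only [hfun, fsum_succ]
  ring

lemma hstep_R (η : Covering L N) (hc : IsCovering η) :
    ∀ y x : ℤ, hfun η (x + 1, y) = hfun η (x, y) + Wz η (x, y) .R := by
  intro y
  induction y using Int.induction_on with
  | zero =>
      intro x
      simp only [hfun, fsum_succ, fsum_zero]
      ring
  | succ y ih =>
      intro x
      have h1 := hstep_U η (x + 1) y
      have h2 := hstep_U η x y
      have hsq := square η hc x y
      have h3 := ih x
      push_cast at *
      linarith
  | pred y ih =>
      intro x
      have h1 := hstep_U η (x + 1) (-y - 1)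
      have h2 := hstep_U η x (-y - 1)
      have hsq := square η hc x (-y - 1)
      have h3 := ih x
      have e1 : (-y - 1 : ℤ) + 1 = -y := by ring
      rw [e1] at h1 h2 hsq
      push_cast at *
      linarith

lemma hstep_UL (η : Covering L N) (hc : IsCovering η) (x y : ℤ) :
    hfun η (x - 1, y + 1) = hfun η (x, y) + Wz η (x, y) .UL := by
  have t := triB η (x - 1) y
  rw [sub_add_cancel] at t
  have h1 := hstep_R η hc y (x - 1)
  rw [sub_add_cancel] at h1
  have h2 := hstep_U η (x - 1) y
  have i := invUD η (x - 1) y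
  linarith

lemma hstep_Lft (η : Covering L N) (hc : IsCovering η) (x y : ℤ) :
    hfun η (x - 1, y) = hfun η (x, y) + Wz η (x, y) .Lft := by
  have h1 := hstep_R η hc y (x - 1)
  rw [sub_add_cancel] at h1
  have i := invRL η x y
  linarith

lemma hstep_D (η : Covering L N) (x y : ℤ) :
    hfun η (x, y - 1) = hfun η (x, y) + Wz η (x, y) .D := by
  have h1 := hstep_U η x (y - 1)
  rw [sub_add_cancel] at h1
  have i := invUD η x (y - 1)
  rw [sub_add_cancel] at i
  linarith

lemma hstep_DR (η : Covering L N) (hc : IsCovering η) (x y : ℤ) :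
    hfun η (x + 1, y - 1) = hfun η (x, y) + Wz η (x, y) .DR := by
  have h1 := hstep_UL η hc (x + 1) (y - 1)
  rw [add_sub_cancel_right, sub_add_cancel] at h1
  have i := invULDR η x y
  linarith

lemma hstep (η : Covering L N) (hc : IsCovering η) (z : ℤ × ℤ) (d : Dir) :
    hfun η (mvZ z d) = hfun η z + Wz η z d := by
  obtain ⟨x, y⟩ := z
  cases d
  · exact hstep_R η hc y x
  · exact hstep_Lft η hc x y
  · exact hstep_U η x y
  · exact hstep_D η x y
  · exact hstep_UL η hc x y
  · exact hstep_DR η hc x y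

/-! ### Quasi-periodicity of the height function -/

lemma pr_addL (x y : ℤ) : (pr (x + L, y) : Idx L N) = pr (x, y) := by
  simp only [pr, Prod.mk.injEq]
  refine ⟨by push_cast; simp, trivial⟩

lemma pr_addN (x y : ℤ) : (pr (x, y + N) : Idx L N) = pr (x, y) := by
  simp only [pr, Prod.mk.injEq]
  refine ⟨trivial, by push_cast; simp⟩

lemma Wz_addL (η : Covering L N) (x y : ℤ) (d : Dir) :
    Wz η (x + L, y) d = Wz η (x, y) d := by
  unfold Wz; rw [pr_addL]

lemma Wz_addN (η : Covering L N) (x y : ℤ) (d : Dir) :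
    Wz η (x, y + N) d = Wz η (x, y) d := by
  unfold Wz; rw [pr_addN]

lemma hA (η : Covering L N) (hc : IsCovering η) (x y : ℤ) :
    hfun η (x + L, y) = hfun η (x, y) + hfun η ((L : ℤ), 0) := by
  have base : ∀ x : ℤ, hfun η (x + L, 0) = hfun η (x, 0) + hfun η ((L : ℤ), 0) := by
    intro x
    induction x using Int.induction_on with
    | zero => rw [zero_add, hfun_zero]; ring
    | succ x ih =>
        have e : ((x : ℤ) + 1 + L) = (x + L) + 1 := by ring
        rw [e, hstep_R η hc 0 (x + L), ih, Wz_addL, hstep_R η hc 0 x]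
        ring
    | pred x ih =>
        have h1 := hstep_R η hc 0 (-x - 1 + L)
        have h2 := hstep_R η hc 0 (-x - 1)
        have h3 : Wz η (-x - 1 + L, 0) .R = Wz η (-x - 1, 0) .R := Wz_addL η _ _ _
        have e2 : (-x - 1 + L + 1 : ℤ) = -x + L := by ring
        have e3 : (-x - 1 + 1 : ℤ) = -x := by ring
        rw [e2] at h1
        rw [e3] at h2
        linarith
  induction y using Int.induction_on with
  | zero => exact base x
  | succ y ih =>
      rw [hstep_U η (x + L) y, hstep_U η x y, Wz_addL, ih]
      ring
  | pred y ih =>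
      have h1 := hstep_D η (x + L) (-y)
      have h2 := hstep_D η x (-y)
      have h3 : Wz η (x + L, -y) .D = Wz η (x, -y) .D := Wz_addL η _ _ _
      linarith

lemma hB (η : Covering L N) (hc : IsCovering η) (x y : ℤ) :
    hfun η (x, y + N) = hfun η (x, y) + hfun η (0, (N : ℤ)) := by
  have base : ∀ y : ℤ, hfun η (0, y + N) = hfun η (0, y) + hfun η (0, (N : ℤ)) := by
    intro y
    induction y using Int.induction_on with
    | zero => rw [zero_add, hfun_zero]; ring
    | succ y ih =>
        have e : ((y : ℤ) + 1 + N) = (y + N) + 1 := by ring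
        rw [e, hstep_U η 0 (y + N), ih, Wz_addN, hstep_U η 0 y]
        ring
    | pred y ih =>
        have h1 := hstep_D η 0 (-y + N)
        have h2 := hstep_D η 0 (-y)
        have h3 : Wz η (0, -y + N) .D = Wz η (0, -y) .D := Wz_addN η 0 (-y) Dir.D
        have e : (-y - 1 + N : ℤ) = -y + N - 1 := by ring
        rw [e]
        linarith
  induction x using Int.induction_on with
  | zero => exact base y
  | succ x ih =>
      rw [hstep_R η hc (y + N) x, hstep_R η hc y x, Wz_addN, ih]
      ring
  | pred x ih =>
      have h1 := hstep_Lft η hc (-x) (y + N)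
      have h2 := hstep_Lft η hc (-x) y
      have h3 : Wz η (-x, y + N) .Lft = Wz η (-x, y) .Lft := Wz_addN η _ _ _
      linarith

lemma hA_mul (η : Covering L N) (hc : IsCovering η) (a x y : ℤ) :
    hfun η (x + a * L, y) = hfun η (x, y) + a * hfun η ((L : ℤ), 0) := by
  induction a using Int.induction_on with
  | zero => simp
  | succ a ih =>
      have e : (x + ((a : ℤ) + 1) * L) = (x + a * L) + L := by ring
      rw [e, hA η hc, ih]
      ring
  | pred a ih =>
      have h1 := hA η hc (x + (-(a : ℤ) - 1) * L) y
      have e : (x + (-(a : ℤ) - 1) * L + L) = x + (-a) * L := by ring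
      rw [e, ih] at h1
      linarith

lemma hB_mul (η : Covering L N) (hc : IsCovering η) (b x y : ℤ) :
    hfun η (x, y + b * N) = hfun η (x, y) + b * hfun η (0, (N : ℤ)) := by
  induction b using Int.induction_on with
  | zero => simp
  | succ b ih =>
      have e : (y + ((b : ℤ) + 1) * N) = (y + b * N) + N := by ring
      rw [e, hB η hc, ih]
      ring
  | pred b ih =>
      have h1 := hB η hc x (y + (-(b : ℤ) - 1) * N)
      have e : (y + (-(b : ℤ) - 1) * N + N) = y + (-b) * N := by ring
      rw [e, ih] at h1
      linarith


/-! ### The two winding constants -/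

lemma row_tele (η : Covering L N) (hc : IsCovering η) (y : ℤ) (n : ℕ) :
    hfun η ((n : ℤ), y) = hfun η (0, y) + ∑ i ∈ Finset.range n, Wz η ((i : ℤ), y) .R := by
  induction n with
  | zero => simp
  | succ n ih =>
      have e : ((n + 1 : ℕ) : ℤ) = (n : ℤ) + 1 := by push_cast; ring
      rw [e, hstep_R η hc y (n : ℤ), ih, Finset.sum_range_succ]
      ring

lemma col_tele (η : Covering L N) (x : ℤ) (n : ℕ) :
    hfun η (x, (n : ℤ)) = hfun η (x, 0) + ∑ i ∈ Finset.range n, Wz η (x, (i : ℤ)) .U := by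
  induction n with
  | zero => simp
  | succ n ih =>
      have e : ((n + 1 : ℕ) : ℤ) = (n : ℤ) + 1 := by push_cast; ring
      rw [e, hstep_U η x (n : ℤ), ih, Finset.sum_range_succ]
      ring

lemma row_const (η : Covering L N) (hc : IsCovering η) (y : ℤ) :
    ∑ i ∈ Finset.range L, Wz η ((i : ℤ), y) .R = hfun η ((L : ℤ), 0) := by
  have h1 := row_tele η hc y L
  have h2 := hA η hc 0 y
  rw [zero_add] at h2
  rw [h2] at h1
  linarith

lemma col_const (η : Covering L N) (hc : IsCovering η) (x : ℤ) :
    ∑ i ∈ Finset.range N, Wz η (x, (i : ℤ)) .U = hfun η (0, (N : ℤ)) := by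
  have h1 := col_tele η x N
  have h2 := hB η hc x 0
  rw [zero_add] at h2
  rw [h2] at h1
  linarith

lemma zmod_sum {M : Type*} [AddCommMonoid M] (n : ℕ) [NeZero n] (f : ZMod n → M) :
    ∑ x ∈ Finset.range n, f (x : ZMod n) = ∑ s : ZMod n, f s := by
  refine Finset.sum_nbij' (fun x => (x : ZMod n)) (fun s => s.val) ?_ ?_ ?_ ?_ ?_
  · intro a _; exact Finset.mem_univ _
  · intro s _; exact Finset.mem_range.mpr (ZMod.val_lt s)
  · intro a ha; exact ZMod.val_cast_of_lt (Finset.mem_range.mp ha)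
  · intro s _; exact ZMod.natCast_rightInverse s
  · intro a _; rfl

lemma sum_pr (F : Idx L N → ℤ) :
    ∑ y ∈ Finset.range N, ∑ x ∈ Finset.range L, F ((x : ZMod L), (y : ZMod N))
      = ∑ b : Idx L N, F b := by
  rw [Finset.sum_comm, Fintype.sum_prod_type,
    ← zmod_sum (n := L) (fun s => ∑ t : ZMod N, F (s, t))]
  refine Finset.sum_congr rfl fun x _ => ?_
  exact zmod_sum (n := N) (fun t => F ((x : ZMod L), t))

lemma Wz_coe (η : Covering L N) (x y : ℕ) (d : Dir) :
    Wz η ((x : ℤ), (y : ℤ)) d = Wf η ((x : ZMod L), (y : ZMod N)) d := by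
  unfold Wz pr
  push_cast
  rfl

lemma sum_Wf_R (η : Covering L N) :
    ∑ b : Idx L N, Wf η b .R = 3 * ((Finset.univ.filter fun b : Idx L N => η b = 0).card : ℤ)
      - (L : ℤ) * N := by
  have : ∀ b : Idx L N, Wf η b .R = 3 * (if η b = 0 then (1 : ℤ) else 0) - 1 := by
    intro b
    simp [Wf, crossSign, eInd, crossEdge, occupiedEdge]
  rw [Finset.sum_congr rfl fun b _ => this b]
  rw [Finset.sum_sub_distrib, ← Finset.mul_sum, Finset.sum_boole, Finset.sum_const,
    Finset.card_univ]
  have : Fintype.card (Idx L N) = L * N := by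
    rw [Fintype.card_prod, ZMod.card, ZMod.card]
  rw [this]
  push_cast
  ring

lemma sum_Wf_U (η : Covering L N) :
    ∑ b : Idx L N, Wf η b .U = (L : ℤ) * N
      - 3 * ((Finset.univ.filter fun b : Idx L N => η b = 1).card : ℤ) := by
  have : ∀ b : Idx L N, Wf η b .U = 1 - 3 * (if η b = 1 then (1 : ℤ) else 0) := by
    intro b
    simp [Wf, crossSign, eInd, crossEdge, occupiedEdge]
  rw [Finset.sum_congr rfl fun b _ => this b]
  rw [Finset.sum_sub_distrib, ← Finset.mul_sum, Finset.sum_boole, Finset.sum_const,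
    Finset.card_univ]
  have : Fintype.card (Idx L N) = L * N := by
    rw [Fintype.card_prod, ZMod.card, ZMod.card]
  rw [this]
  push_cast
  ring

lemma NA_eq (η : Covering L N) (hc : IsCovering η) :
    (N : ℤ) * hfun η ((L : ℤ), 0)
      = 3 * ((Finset.univ.filter fun b : Idx L N => η b = 0).card : ℤ) - (L : ℤ) * N := by
  have h1 : ∑ y ∈ Finset.range N, ∑ x ∈ Finset.range L, Wz η ((x : ℤ), (y : ℤ)) .R
      = (N : ℤ) * hfun η ((L : ℤ), 0) := by
    rw [Finset.sum_congr rfl (fun (y : ℕ) (_ : y ∈ Finset.range N) => row_const η hc (y : ℤ))]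
    rw [Finset.sum_const, Finset.card_range]
    push_cast
    ring
  have h2 : ∑ y ∈ Finset.range N, ∑ x ∈ Finset.range L, Wz η ((x : ℤ), (y : ℤ)) .R
      = ∑ b : Idx L N, Wf η b .R := by
    rw [← sum_pr (fun b => Wf η b .R)]
    exact Finset.sum_congr rfl fun y _ => Finset.sum_congr rfl fun x _ => Wz_coe η x y .R
  rw [← h1, h2, sum_Wf_R]

lemma LB_eq (η : Covering L N) (hc : IsCovering η) :
    (L : ℤ) * hfun η (0, (N : ℤ))
      = (L : ℤ) * N - 3 * ((Finset.univ.filter fun b : Idx L N => η b = 1).card : ℤ) := by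
  have h1 : ∑ x ∈ Finset.range L, ∑ y ∈ Finset.range N, Wz η ((x : ℤ), (y : ℤ)) .U
      = (L : ℤ) * hfun η (0, (N : ℤ)) := by
    rw [Finset.sum_congr rfl (fun (x : ℕ) (_ : x ∈ Finset.range L) => col_const η hc (x : ℤ))]
    rw [Finset.sum_const, Finset.card_range]
    push_cast
    ring
  have h2 : ∑ x ∈ Finset.range L, ∑ y ∈ Finset.range N, Wz η ((x : ℤ), (y : ℤ)) .U
      = ∑ b : Idx L N, Wf η b .U := by
    rw [← sum_pr (fun b => Wf η b .U)]
    rw [Finset.sum_comm]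
    exact Finset.sum_congr rfl fun y _ => Finset.sum_congr rfl fun x _ => Wz_coe η x y .U
  rw [← h1, h2, sum_Wf_U]



/-! ### No closed loops -/

/-- The linear functional combining height and winding used to rule out loops. -/
def Fh (η : Covering L N) (n1 n2 : ℕ) (zz : ℤ × ℤ) : ℤ :=
  ((N : ℤ) * L) * hfun η zz - zz.1 * (3 * (n1 : ℤ) - (N : ℤ) * L)
    - zz.2 * ((N : ℤ) * L - 3 * (n2 : ℤ))

lemma Fh_step (η : Covering L N) (hc : IsCovering η) {n1 n2 : ℕ}
    (c1 : (0 : ℤ) < (n1 : ℤ)) (c2 : (0 : ℤ) < (n2 : ℤ))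
    (c3 : (n1 : ℤ) + (n2 : ℤ) < (N : ℤ) * L)
    (zz : ℤ × ℤ) (dd : Dir) (hsign : crossSign dd = -1) (hW : Wz η zz dd = 1) :
    Fh η n1 n2 zz + 3 ≤ Fh η n1 n2 (mvZ zz dd) := by
  have hstep' := hstep η hc zz dd
  rw [hW] at hstep'
  rcases (crossSign_neg_iff dd).mp hsign with rfl | rfl | rfl <;>
    · unfold Fh
      rw [hstep']
      unfold mvZ
      dsimp only
      linarith [c1, c2, c3]

lemma no_dup {n1 n2 : ℕ} (hn1 : 0 < n1) (hn2 : 0 < n2) (hn : n1 + n2 < N * L)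
    (η : Covering L N) (hη : η ∈ Omega L N n1 n2) {n : ℕ} (fs : Fin (n + 1) → Idx L N)
    (hsteps : ∀ i : Fin n, WhiteLeftStep η (fs i.castSucc) (fs i.succ)) :
    Function.Injective fs := by
  obtain ⟨hc, hv, hw⟩ := hη
  choose d hd1 hd2 hd3 using hsteps
  set z : ℕ → ℤ × ℤ := fun m =>
    Nat.rec ((((fs 0).1.val : ℤ)), (((fs 0).2.val : ℤ)))
      (fun m zm => if h : m < n then mvZ zm (d ⟨m, h⟩) else zm) m with hz
  have zsucc : ∀ (m : ℕ) (h : m < n), z (m + 1) = mvZ (z m) (d ⟨m, h⟩) := by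
    intro m h
    simp only [hz]
    rw [dif_pos h]
  have z0 : z 0 = ((((fs 0).1.val : ℤ)), (((fs 0).2.val : ℤ))) := rfl
  clear_value z
  clear hz
  have hpr : ∀ (m : ℕ) (hm : m ≤ n), pr (z m) = fs ⟨m, Nat.lt_succ_of_le hm⟩ := by
    intro m
    induction m with
    | zero =>
        intro _
        have e0 : (⟨0, Nat.lt_succ_of_le (Nat.zero_le n)⟩ : Fin (n + 1)) = 0 := rfl
        rw [z0, e0]
        unfold pr
        refine Prod.ext ?_ ?_
        · show ((((fs 0).1.val : ℤ)) : ZMod L) = (fs 0).1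
          rw [Int.cast_natCast]
          exact ZMod.natCast_rightInverse (fs 0).1
        · show ((((fs 0).2.val : ℤ)) : ZMod N) = (fs 0).2
          rw [Int.cast_natCast]
          exact ZMod.natCast_rightInverse (fs 0).2
    | succ m ih =>
        intro hm
        have hlt : m < n := hm
        rw [zsucc m hlt, pr_mv, ih (le_of_lt hlt)]
        exact (hd2 ⟨m, hlt⟩).symm
  have c1 : (0 : ℤ) < (n1 : ℤ) := by exact_mod_cast hn1
  have c2 : (0 : ℤ) < (n2 : ℤ) := by exact_mod_cast hn2
  have c3 : (n1 : ℤ) + (n2 : ℤ) < (N : ℤ) * L := by exact_mod_cast hn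
  have hNA : (N : ℤ) * hfun η ((L : ℤ), 0) = 3 * (n1 : ℤ) - (L : ℤ) * N := by
    rw [NA_eq η hc]
    unfold nVert at hv
    rw [hv]
  have hLB : (L : ℤ) * hfun η (0, (N : ℤ)) = (L : ℤ) * N - 3 * (n2 : ℤ) := by
    rw [LB_eq η hc]
    unfold nNW at hw
    rw [hw]
  have step : ∀ (m : ℕ) (h : m < n), Fh η n1 n2 (z m) + 3 ≤ Fh η n1 n2 (z (m + 1)) := by
    intro m h
    have hWz : Wz η (z m) (d ⟨m, h⟩) = 1 := by
      have hocc := hd3 ⟨m, h⟩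
      have hcs : (⟨m, h⟩ : Fin n).castSucc = (⟨m, Nat.lt_succ_of_le (le_of_lt h)⟩ : Fin (n + 1)) :=
        Fin.ext (by simp)
      have hfseq : fs ((⟨m, h⟩ : Fin n).castSucc) = pr (z m) := by
        rw [hcs, hpr m (le_of_lt h)]
      rw [hfseq] at hocc
      unfold Wz Wf eInd
      rw [hd1 ⟨m, h⟩, if_neg hocc]
      ring
    rw [zsucc m h]
    exact Fh_step η hc c1 c2 c3 (z m) (d ⟨m, h⟩) (hd1 ⟨m, h⟩) hWz
  have mono : ∀ (m m' : ℕ), m ≤ m' → m' ≤ n →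
      Fh η n1 n2 (z m) + 3 * ((m' : ℤ) - (m : ℤ)) ≤ Fh η n1 n2 (z m') := by
    intro m m' hmm'
    induction m', hmm' using Nat.le_induction with
    | base =>
        intro _
        simp
    | succ k hk ih =>
        intro hkn
        have h1 := ih (le_of_lt hkn)
        have h2 := step k hkn
        push_cast
        push_cast at h1
        linarith
  suffices hmain : ∀ i j : Fin (n + 1), i < j → fs i ≠ fs j by
    intro i j hij
    by_contra hne
    rcases lt_trichotomy i j with h | h | h
    · exact absurd hij (hmain i j h)
    · exact hne h
    · exact absurd hij.symm (hmain j i h)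
  intro i j hij heq
  have hi : (i : ℕ) ≤ n := Nat.lt_succ_iff.mp i.isLt
  have hj : (j : ℕ) ≤ n := Nat.lt_succ_iff.mp j.isLt
  have hpri : pr (z (i : ℕ)) = fs i := by
    rw [hpr (i : ℕ) hi]
  have hprj : pr (z (j : ℕ)) = fs j := by
    rw [hpr (j : ℕ) hj]
  have hpp : (pr (z (i : ℕ)) : Idx L N) = pr (z (j : ℕ)) := by rw [hpri, hprj, heq]
  have hfst : (((z (i : ℕ)).1 : ℤ) : ZMod L) = (((z (j : ℕ)).1 : ℤ) : ZMod L) :=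
    congrArg Prod.fst hpp
  have hsnd : (((z (i : ℕ)).2 : ℤ) : ZMod N) = (((z (j : ℕ)).2 : ℤ) : ZMod N) :=
    congrArg Prod.snd hpp
  obtain ⟨a, ha⟩ : ((L : ℤ)) ∣ (z (j : ℕ)).1 - (z (i : ℕ)).1 :=
    Int.ModEq.dvd ((ZMod.intCast_eq_intCast_iff _ _ _).mp hfst)
  obtain ⟨b, hb⟩ : ((N : ℤ)) ∣ (z (j : ℕ)).2 - (z (i : ℕ)).2 :=
    Int.ModEq.dvd ((ZMod.intCast_eq_intCast_iff _ _ _).mp hsnd)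
  have ha' : (z (j : ℕ)).1 = (z (i : ℕ)).1 + a * L := by linarith [ha]
  have hb' : (z (j : ℕ)).2 = (z (i : ℕ)).2 + b * N := by linarith [hb]
  have hzj : z (j : ℕ) = ((z (i : ℕ)).1 + a * L, (z (i : ℕ)).2 + b * N) :=
    Prod.ext ha' hb'
  have hfj : hfun η (z (j : ℕ))
      = hfun η (z (i : ℕ)) + a * hfun η ((L : ℤ), 0) + b * hfun η (0, (N : ℤ)) := by
    rw [hzj, hB_mul η hc b, hA_mul η hc a]
  have hFeq : Fh η n1 n2 (z (j : ℕ)) = Fh η n1 n2 (z (i : ℕ)) := by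
    unfold Fh
    rw [hfj, ha', hb']
    linear_combination (a * (L : ℤ)) * hNA + (b * (N : ℤ)) * hLB
  have hmono := mono (i : ℕ) (j : ℕ) (le_of_lt hij) hj
  have hij' : ((i : ℕ) : ℤ) < ((j : ℕ) : ℤ) := by exact_mod_cast hij
  linarith

end Aux

/-- For a covering `η ∈ Ω_{L,N;n₁,n₂}` (with `n₁, n₂ > 0` and
`n₁ + n₂ < NL`), any path of faces started at `f` whose steps cross only unoccupied edges
with the white vertex on the left can contain no closed loop (it never repeats a face);
consequently some such path started at `f` terminates at a face at which all three edges
with the white vertex on the left are occupied. -/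
theorem whiteLeft_path_no_loop
    {L N : ℕ} [NeZero L] [NeZero N]
    (n1 n2 : ℕ) (hn1 : 0 < n1) (hn2 : 0 < n2) (hn : n1 + n2 < N * L)
    (η : Covering L N) (hη : η ∈ Omega L N n1 n2) (f : Idx L N) :
    (∀ (n : ℕ) (fs : Fin (n + 1) → Idx L N), fs 0 = f →
      (∀ i : Fin n, WhiteLeftStep η (fs i.castSucc) (fs i.succ)) →
      Function.Injective fs) ∧
    (∃ (n : ℕ) (fs : Fin (n + 1) → Idx L N), fs 0 = f ∧
      (∀ i : Fin n, WhiteLeftStep η (fs i.castSucc) (fs i.succ)) ∧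
      ∀ d : Dir, crossSign d = -1 → occupiedEdge η (crossEdge (fs (Fin.last n)) d)) := by
  constructor
  · intro n fs _ hsteps
    exact no_dup hn1 hn2 hn η hη fs hsteps
  · by_contra hcon
    have key : ∀ m : ℕ, ∃ fs : Fin (m + 1) → Idx L N, fs 0 = f ∧
        (∀ i : Fin m, WhiteLeftStep η (fs i.castSucc) (fs i.succ)) := by
      intro m
      induction m with
      | zero => exact ⟨fun _ => f, rfl, fun i => i.elim0⟩
      | succ m ih =>
          obtain ⟨fs, h0, hs⟩ := ih
          by_cases hterm : ∀ d : Dir, crossSign d = -1 →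
              occupiedEdge η (crossEdge (fs (Fin.last m)) d)
          · exact absurd ⟨m, fs, h0, hs, hterm⟩ hcon
          · push_neg at hterm
            obtain ⟨dd, hd, hocc⟩ := hterm
            refine ⟨fun i : Fin (m + 2) => if h : (i : ℕ) < m + 1 then fs ⟨(i : ℕ), h⟩
              else nextFace (fs (Fin.last m)) dd, ?_, ?_⟩
            · show (if h : ((0 : Fin (m + 2)) : ℕ) < m + 1
                  then fs ⟨((0 : Fin (m + 2)) : ℕ), h⟩
                  else nextFace (fs (Fin.last m)) dd) = f
              simp only [Fin.val_zero]
              exact h0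
            · intro i
              show WhiteLeftStep η
                (if h : ((i.castSucc : Fin (m + 2)) : ℕ) < m + 1
                  then fs ⟨((i.castSucc : Fin (m + 2)) : ℕ), h⟩
                  else nextFace (fs (Fin.last m)) dd)
                (if h : ((i.succ : Fin (m + 2)) : ℕ) < m + 1
                  then fs ⟨((i.succ : Fin (m + 2)) : ℕ), h⟩
                  else nextFace (fs (Fin.last m)) dd)
              simp only [Fin.coe_castSucc, Fin.val_succ]
              rw [dif_pos i.isLt]
              by_cases hi : (i : ℕ) < m
              · rw [dif_pos (Nat.succ_lt_succ hi)]
                simpa [Fin.castSucc_mk, Fin.succ_mk] using hs ⟨(i : ℕ), hi⟩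
              · have him : (i : ℕ) = m := by omega
                rw [dif_neg (by omega)]
                have hlast : (⟨(i : ℕ), i.isLt⟩ : Fin (m + 1)) = Fin.last m :=
                  Fin.ext (by simpa using him)
                rw [hlast]
                exact ⟨dd, hd, rfl, hocc⟩
    obtain ⟨fs, h0, hs⟩ := key (L * N)
    have hinj := no_dup hn1 hn2 hn η hη fs hs
    have hcard := Fintype.card_le_of_injective fs hinj
    rw [Fintype.card_fin, Fintype.card_prod, ZMod.card, ZMod.card] at hcard
    omega

end HexDimers
end
end

section
/- In any interlacing particle configuration on T_{L,N} with m1 particles per row, starting from any particle p and repeatedly moving to up-right neighbors (p ↦ p6) yields a path Γ that returns to the starting particle p and forms a simple loop: no particle along Γ is reached from two distinct particles. Moreover the horizontal and vertical winding numbers N_h, N_v of Γ do not depend on the chosen starting particle p. -/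
/-!
Interlacing particle configurations on the discrete torus `T_{L,N}`,
the periodized `q`-Whittaker dynamics and its Gibbs measures
(Corwin–Toninelli, "A (2+1)-dimensional growth process with explicit
stationary measures").
-/

open scoped Classical

noncomputable section

namespace QWhittaker

/-- Sites of the discrete torus `T_{L,N} = (ℤ/Lℤ) × (ℤ/Nℤ)`.
The first coordinate is the horizontal position, the second one is the row. -/
abbrev Site (L N : ℕ) := ZMod L × ZMod N

/-- A particle configuration: `η p = true` iff site `p` carries a particle. -/
abbrev Cfg (L N : ℕ) := Site L N → Bool

variable {L N : ℕ}

/-- `A_p`: horizontal distance minus one from `p` to its right neighbour `p₁` on the same row. -/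
def dA (η : Cfg L N) (p : Site L N) : ℕ :=
  sInf {k : ℕ | 0 < k ∧ η (p.1 + (k : ZMod L), p.2) = true} - 1

/-- `B_p`: horizontal distance minus one from `p` to its neighbour `p₂`
(the first particle strictly to the right of `p` in the row below). -/
def dB (η : Cfg L N) (p : Site L N) : ℕ :=
  sInf {k : ℕ | 0 < k ∧ η (p.1 + (k : ZMod L), p.2 - 1) = true} - 1

/-- `C_p`: horizontal distance from `p` to its neighbour `p₃`
(the first particle weakly to the left of `p` in the row below); may be `0`. -/
def dC (η : Cfg L N) (p : Site L N) : ℕ :=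
  sInf {k : ℕ | η (p.1 - (k : ZMod L), p.2 - 1) = true}

/-- `D_p`: horizontal distance minus one from `p` to its left neighbour `p₄` on the same row. -/
def dD (η : Cfg L N) (p : Site L N) : ℕ :=
  sInf {k : ℕ | 0 < k ∧ η (p.1 - (k : ZMod L), p.2) = true} - 1

/-- `E_p`: horizontal distance minus one from `p` to its neighbour `p₅`
(the first particle strictly to the left of `p` in the row above). -/
def dE (η : Cfg L N) (p : Site L N) : ℕ :=
  sInf {k : ℕ | 0 < k ∧ η (p.1 - (k : ZMod L), p.2 + 1) = true} - 1

/-- `F_p`: horizontal distance from `p` to its up-right neighbour `p₆`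
(the first particle weakly to the right of `p` in the row above); may be `0`. -/
def dF (η : Cfg L N) (p : Site L N) : ℕ :=
  sInf {k : ℕ | η (p.1 + (k : ZMod L), p.2 + 1) = true}

/-- Interlaced configurations with `m1` particles per row: every row carries exactly `m1`
particles and, for every particle `p`, the row below contains exactly one particle with
horizontal position in `{x_p+1, …, x_{p₁}}` and exactly one with horizontal position in
`{x_{p₄}+1, …, x_p}`. -/
def Interlaced [NeZero L] [NeZero N] (m1 : ℕ) (η : Cfg L N) : Prop :=
  (∀ t : ZMod N, (Finset.univ.filter fun s : ZMod L => η (s, t) = true).card = m1) ∧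
  ∀ p : Site L N, η p = true →
    ((Finset.Icc 1 (dA η p + 1)).filter
        fun k : ℕ => η (p.1 + (k : ZMod L), p.2 - 1) = true).card = 1 ∧
    ((Finset.Icc 0 (dD η p)).filter
        fun k : ℕ => η (p.1 - (k : ZMod L), p.2 - 1) = true).card = 1

/-- The map `p ↦ p₆` sending a particle to its up-right neighbour. -/
def stepUR (η : Cfg L N) (p : Site L N) : Site L N :=
  (p.1 + (dF η p : ZMod L), p.2 + 1)

/-- Return time of the loop `Γ` of successive up-right neighbours started at `p`. -/
def retTime (η : Cfg L N) (p : Site L N) : ℕ :=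
  sInf {t : ℕ | 0 < t ∧ (stepUR η)^[t] p = p}

/-- Vertical winding number `N_v` of the loop `Γ` started at `p`. -/
def windV (η : Cfg L N) (p : Site L N) : ℕ := retTime η p / N

/-- Horizontal winding number `N_h` of the loop `Γ` started at `p` (the total horizontal
displacement along `Γ` divided by the horizontal period `L`). -/
def windH (η : Cfg L N) (p : Site L N) : ℕ :=
  (∑ i ∈ Finset.range (retTime η p), dF η ((stepUR η)^[i] p)) / L

/-- The sector `Ω_{L,N;m1,m2}`: interlaced configurations with `m1` particles per row whose
winding numbers satisfy `m1 · N_h = m2 · N_v`, i.e. `m2 = m1 · N_h / N_v`. -/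
def InSector [NeZero L] [NeZero N] (m1 m2 : ℕ) (η : Cfg L N) : Prop :=
  Interlaced m1 η ∧ ∀ p : Site L N, η p = true → m1 * windH η p = m2 * windV η p

/-- The particles of a configuration, as a finite set of sites. -/
def particles [NeZero L] [NeZero N] (η : Cfg L N) : Finset (Site L N) :=
  Finset.univ.filter fun p => η p = true

/-- The `q`-Pochhammer symbol `(q;q)_n = (1-q)(1-q²)⋯(1-qⁿ)`. -/
def qPoch (q : ℝ) (n : ℕ) : ℝ := ∏ i ∈ Finset.range n, (1 - q ^ (i + 1))

/-- Unnormalised Gibbs weight `∏_p a_{r(p)}^{C_p} (q;q)_{A_p} / ((q;q)_{B_p} (q;q)_{C_p})`. -/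
def weight [NeZero L] [NeZero N] (q : ℝ) (a : ZMod N → ℝ) (η : Cfg L N) : ℝ :=
  ∏ p ∈ particles η,
    a p.2 ^ dC η p * qPoch q (dA η p) / (qPoch q (dB η p) * qPoch q (dC η p))

/-- The sector `Ω_{L,N;m1,m2}` as a finite set of configurations. -/
def sectorFinset (L N : ℕ) [NeZero L] [NeZero N] (m1 m2 : ℕ) : Finset (Cfg L N) :=
  Finset.univ.filter fun σ => InSector m1 m2 σ

/-- The normalised Gibbs probability measure `π = π_{L,N;m1,m2}` on the sector. -/
def gibbs [NeZero L] [NeZero N] (q : ℝ) (a : ZMod N → ℝ) (m1 m2 : ℕ) (σ : Cfg L N) : ℝ :=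
  weight q a σ / ∑ τ ∈ sectorFinset L N m1 m2, weight q a τ

/-- `V_p⁺`: the particle `p` together with all particles reachable from `p` along upward
edges (an upward edge joins `r` to its up-right neighbour `r₆` whenever `F_r = 0`). -/
def Vplus (η : Cfg L N) (p : Site L N) : Set (Site L N) :=
  {z | ∃ j : ℕ, z = (p.1, p.2 + (j : ZMod N)) ∧
    ∀ i : ℕ, i ≤ j → η (p.1, p.2 + (i : ZMod N)) = true}

/-- `V_p⁻`: the particle `p` together with all particles reachable from `p` along downward
edges (a downward edge joins `r` to its neighbour `r₃` whenever `C_r = 0`). -/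
def Vminus (η : Cfg L N) (p : Site L N) : Set (Site L N) :=
  {z | ∃ j : ℕ, z = (p.1, p.2 - (j : ZMod N)) ∧
    ∀ i : ℕ, i ≤ j → η (p.1, p.2 - (i : ZMod N)) = true}

/-- The configuration obtained from `η` by shifting every particle of `V_p⁺` by `+e₁`. -/
def moveR (η : Cfg L N) (p : Site L N) : Cfg L N := fun z =>
  decide ((η z = true ∧ z ∉ Vplus η p) ∨ (z.1 - 1, z.2) ∈ Vplus η p)

/-- The configuration obtained from `η` by shifting every particle of `V_p⁻` by `-e₁`. -/
def moveL (η : Cfg L N) (p : Site L N) : Cfg L N := fun z =>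
  decide ((η z = true ∧ z ∉ Vminus η p) ∨ (z.1 + 1, z.2) ∈ Vminus η p)

/-- The number of downward edges below `p` in `V_p⁻`. -/
def depth (η : Cfg L N) (p : Site L N) : ℕ :=
  sInf {j : ℕ | η (p.1, p.2 - ((j + 1 : ℕ) : ZMod N)) = false}

/-- `r_p⁻`, the lowest particle of `V_p⁻`. -/
def rbot (η : Cfg L N) (p : Site L N) : Site L N :=
  (p.1, p.2 - (depth η p : ZMod N))

/-- The number of upward edges above `p` in `V_p⁺`. -/
def height (η : Cfg L N) (p : Site L N) : ℕ :=
  sInf {j : ℕ | η (p.1, p.2 + ((j + 1 : ℕ) : ZMod N)) = false}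

/-- `r_p⁺`, the highest particle of `V_p⁺`. -/
def rtop (η : Cfg L N) (p : Site L N) : Site L N :=
  (p.1, p.2 + (height η p : ZMod N))

/-- The jump rate `a_{r(p)} (1-q^{B_p})(1-q^{D_p+1})/(1-q^{C_p+1})` of the update
shifting the family `V_p⁺` by `+e₁`. -/
def rate (q : ℝ) (a : ZMod N → ℝ) (η : Cfg L N) (p : Site L N) : ℝ :=
  a p.2 * (1 - q ^ dB η p) * (1 - q ^ (dD η p + 1)) / (1 - q ^ (dC η p + 1))

/-- The generator `𝓛` of the periodized `q`-Whittaker dynamics: for `σ ≠ η`, `𝓛(η,σ)` is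
the total rate of the updates taking `η` to `σ`, and the diagonal makes row sums vanish. -/
def gen [NeZero L] [NeZero N] (q : ℝ) (a : ZMod N → ℝ) (η σ : Cfg L N) : ℝ :=
  if σ = η then -∑ p ∈ particles η, rate q a η p
  else ∑ p ∈ (particles η).filter (fun p => moveR η p = σ), rate q a η p


/-! ### Auxiliary material for Statement 4 -/

/-- The gap `A_p + 1` to the right neighbour on the same row. -/
def gA (η : Cfg L N) (q : Site L N) : ℕ := dA η q + 1

/-- The map sending a particle to its right neighbour on the same row. -/
def sR (η : Cfg L N) (q : Site L N) : Site L N := (q.1 + (gA η q : ZMod L), q.2)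

section Aux

variable [NeZero L] [NeZero N] {m1 : ℕ} {η : Cfg L N}

set_option linter.unusedSectionVars false

lemma cast_inj_lt {a b : ℕ} (ha : a < L) (hb : b < L) (h : (a : ZMod L) = (b : ZMod L)) :
    a = b := by
  rw [← ZMod.val_cast_of_lt ha, ← ZMod.val_cast_of_lt hb, h]

lemma SA_nonempty {q : Site L N} (hq : η q = true) :
    {k : ℕ | 0 < k ∧ η (q.1 + (k : ZMod L), q.2) = true}.Nonempty :=
  ⟨L, NeZero.pos L, by simpa using hq⟩

lemma gA_eq_sInf {q : Site L N} (hq : η q = true) :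
    gA η q = sInf {k : ℕ | 0 < k ∧ η (q.1 + (k : ZMod L), q.2) = true} := by
  have hmem := Nat.sInf_mem (SA_nonempty hq)
  have : 0 < sInf {k : ℕ | 0 < k ∧ η (q.1 + (k : ZMod L), q.2) = true} := hmem.1
  unfold gA dA
  omega

lemma gA_pos (q : Site L N) : 0 < gA η q := Nat.succ_pos _

lemma gA_le_L {q : Site L N} (hq : η q = true) : gA η q ≤ L := by
  rw [gA_eq_sInf hq]
  exact Nat.sInf_le ⟨NeZero.pos L, by simpa using hq⟩

lemma sR_particle {q : Site L N} (hq : η q = true) : η (sR η q) = true := by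
  have hmem := Nat.sInf_mem (SA_nonempty hq)
  rw [← gA_eq_sInf hq] at hmem
  exact hmem.2

lemma gA_min {q : Site L N} (hq : η q = true) {k : ℕ} (hk : 0 < k) (hlt : k < gA η q) :
    ¬ η (q.1 + (k : ZMod L), q.2) = true := by
  rw [gA_eq_sInf hq] at hlt
  have := Nat.notMem_of_lt_sInf hlt
  exact fun h => this ⟨hk, h⟩


/-! #### `D`-gap lemmas -/

lemma SD_nonempty {q : Site L N} (hq : η q = true) :
    {k : ℕ | 0 < k ∧ η (q.1 - (k : ZMod L), q.2) = true}.Nonempty :=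
  ⟨L, NeZero.pos L, by simpa using hq⟩

lemma gD_eq_sInf {q : Site L N} (hq : η q = true) :
    dD η q + 1 = sInf {k : ℕ | 0 < k ∧ η (q.1 - (k : ZMod L), q.2) = true} := by
  have hmem := Nat.sInf_mem (SD_nonempty hq)
  have : 0 < sInf {k : ℕ | 0 < k ∧ η (q.1 - (k : ZMod L), q.2) = true} := hmem.1
  unfold dD
  omega

lemma gD_particle {q : Site L N} (hq : η q = true) :
    η (q.1 - ((dD η q + 1 : ℕ) : ZMod L), q.2) = true := by
  have hmem := Nat.sInf_mem (SD_nonempty hq)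
  rw [← gD_eq_sInf hq] at hmem
  exact hmem.2

lemma gD_min {q : Site L N} (hq : η q = true) {k : ℕ} (hk : 0 < k) (hlt : k < dD η q + 1) :
    ¬ η (q.1 - (k : ZMod L), q.2) = true := by
  rw [gD_eq_sInf hq] at hlt
  exact fun h => Nat.notMem_of_lt_sInf hlt ⟨hk, h⟩

/-! #### `F`-gap lemmas -/

lemma row_nonempty (hη : Interlaced m1 η) (hm : 0 < m1) (t : ZMod N) :
    ∃ s : ZMod L, η (s, t) = true := by
  have h := hη.1 t
  have hc : 0 < (Finset.univ.filter fun s : ZMod L => η (s, t) = true).card := by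
    rw [h]; exact hm
  obtain ⟨s, hs⟩ := Finset.card_pos.mp hc
  exact ⟨s, (Finset.mem_filter.mp hs).2⟩

lemma SF_nonempty (hη : Interlaced m1 η) (hm : 0 < m1) (q : Site L N) :
    {k : ℕ | η (q.1 + (k : ZMod L), q.2 + 1) = true}.Nonempty := by
  obtain ⟨s, hs⟩ := row_nonempty hη hm (q.2 + 1)
  exact ⟨(s - q.1).val, by simpa [ZMod.natCast_val] using hs⟩

lemma dF_lt_L (hη : Interlaced m1 η) (hm : 0 < m1) (q : Site L N) : dF η q < L := by
  obtain ⟨s, hs⟩ := row_nonempty hη hm (q.2 + 1)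
  have hle : dF η q ≤ (s - q.1).val :=
    Nat.sInf_le (by simpa [ZMod.natCast_val] using hs)
  exact lt_of_le_of_lt hle (ZMod.val_lt _)

lemma stepUR_particle (hη : Interlaced m1 η) (hm : 0 < m1) (q : Site L N) :
    η (stepUR η q) = true :=
  Nat.sInf_mem (SF_nonempty hη hm q)

lemma dF_min (q : Site L N) {k : ℕ} (hlt : k < dF η q) :
    ¬ η (q.1 + (k : ZMod L), q.2 + 1) = true :=
  fun h => Nat.notMem_of_lt_sInf (s := {k : ℕ | η (q.1 + (k : ZMod L), q.2 + 1) = true}) hlt h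

lemma stepUR_snd (q : Site L N) : (stepUR η q).2 = q.2 + 1 := rfl

lemma stepUR_fst (q : Site L N) : (stepUR η q).1 = q.1 + (dF η q : ZMod L) := rfl

/-- `F_q ≤ D_{q₆}` : the starting particle lies in the `D`-window of its up-right
neighbour. -/
lemma dF_le_dD (hη : Interlaced m1 η) (hm : 0 < m1) {q : Site L N} (hq : η q = true) :
    dF η q ≤ dD η (stepUR η q) := by
  set r := stepUR η q with hr_def
  have hr : η r = true := stepUR_particle hη hm q
  by_contra hcon
  push_neg at hcon
  -- then `r₄ = r - (dD r + 1)` is a particle in row `q.2+1` closer to `q` than `r`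
  have hk : dF η q - (dD η r + 1) < dF η q := by omega
  refine dF_min q hk ?_
  have : q.1 + ((dF η q - (dD η r + 1) : ℕ) : ZMod L) = r.1 - ((dD η r + 1 : ℕ) : ZMod L) := by
    rw [Nat.cast_sub (by omega), hr_def, stepUR_fst]
    ring
  rw [this]
  have := gD_particle hr
  rwa [show r.2 = q.2 + 1 from rfl] at this

/-- Membership of `q` in the `D`-window interlacing filter of `r = q₆`. -/
lemma mem_dD_filter (hη : Interlaced m1 η) (hm : 0 < m1) {q : Site L N} (hq : η q = true) :
    dF η q ∈ (Finset.Icc 0 (dD η (stepUR η q))).filter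
      (fun k : ℕ => η ((stepUR η q).1 - (k : ZMod L), (stepUR η q).2 - 1) = true) := by
  refine Finset.mem_filter.mpr ⟨Finset.mem_Icc.mpr ⟨Nat.zero_le _, dF_le_dD hη hm hq⟩, ?_⟩
  have h1 : (stepUR η q).1 - ((dF η q : ℕ) : ZMod L) = q.1 := by
    rw [stepUR_fst]; ring
  have h2 : (stepUR η q).2 - 1 = q.2 := by
    rw [stepUR_snd]; ring
  rw [h1, h2]; exact hq

/-- `stepUR` is injective on particles. -/
lemma stepUR_inj (hη : Interlaced m1 η) (hm : 0 < m1) {p p' : Site L N}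
    (hp : η p = true) (hp' : η p' = true) (h : stepUR η p = stepUR η p') : p = p' := by
  have h2 : p.2 = p'.2 := by
    have := congrArg Prod.snd h
    rw [stepUR_snd, stepUR_snd] at this
    exact add_right_cancel this
  have hcard := (hη.2 (stepUR η p) (stepUR_particle hη hm p)).2
  have hmem := mem_dD_filter hη hm hp
  have hmem' := mem_dD_filter hη hm hp'
  rw [← h] at hmem'
  have hFF : dF η p = dF η p' :=
    Finset.card_le_one.mp (le_of_eq hcard) _ hmem _ hmem'
  have h1 : p.1 = p'.1 := by
    have := congrArg Prod.fst h
    rw [stepUR_fst, stepUR_fst, hFF] at this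
    exact add_right_cancel this
  exact Prod.ext h1 h2

/-- **Key fact**: the up-right neighbour lies strictly to the left of the right
neighbour: `F_q < A_q + 1`. -/
lemma dF_lt_gA (hη : Interlaced m1 η) (hm : 0 < m1) {q : Site L N} (hq : η q = true) :
    dF η q < gA η q := by
  by_contra hcon
  push_neg at hcon  -- gA η q ≤ dF η q
  set r := stepUR η q with hr_def
  have hr : η r = true := stepUR_particle hη hm q
  have hcard := (hη.2 r hr).2
  have hmem := mem_dD_filter hη hm hq
  -- second member : the right neighbour of `q`
  have hmem' : dF η q - gA η q ∈ (Finset.Icc 0 (dD η r)).filter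
      (fun k : ℕ => η (r.1 - (k : ZMod L), r.2 - 1) = true) := by
    refine Finset.mem_filter.mpr ⟨Finset.mem_Icc.mpr
      ⟨Nat.zero_le _, le_trans (Nat.sub_le _ _) (dF_le_dD hη hm hq)⟩, ?_⟩
    have h1 : r.1 - ((dF η q - gA η q : ℕ) : ZMod L) = q.1 + ((gA η q : ℕ) : ZMod L) := by
      rw [Nat.cast_sub hcon, hr_def, stepUR_fst]; ring
    have h2 : r.2 - 1 = q.2 := by rw [hr_def, stepUR_snd]; ring
    rw [h1, h2]
    exact sR_particle hq
  have heq : dF η q = dF η q - gA η q :=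
    Finset.card_le_one.mp (le_of_eq hcard) _ hmem _ hmem'
  have := gA_pos (η := η) q
  omega

/-- Claim 1: `A_q + 1 ≤ F_q + A_{q₆} + 1`. -/
lemma gA_le_dF_add (hη : Interlaced m1 η) (hm : 0 < m1) {q : Site L N} (hq : η q = true) :
    gA η q ≤ dF η q + gA η (stepUR η q) := by
  by_contra hcon
  push_neg at hcon
  set r := stepUR η q with hr_def
  have hr : η r = true := stepUR_particle hη hm q
  -- interlacing condition 1 for `r` : a particle of row `q.2` in `(x_r, x_r + gA r]`
  have hcard := (hη.2 r hr).1
  have hne : ((Finset.Icc 1 (dA η r + 1)).filter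
      (fun k : ℕ => η (r.1 + (k : ZMod L), r.2 - 1) = true)).Nonempty := by
    rw [← Finset.card_pos, hcard]; norm_num
  obtain ⟨k, hk⟩ := hne
  obtain ⟨hk1, hk2⟩ := Finset.mem_filter.mp hk
  obtain ⟨hk1a, hk1b⟩ := Finset.mem_Icc.mp hk1
  -- then `dF q + k` is a particle of row `q.2` strictly between `q` and `sR q`
  refine gA_min hq (k := dF η q + k) (by omega) (by unfold gA; unfold gA at hcon; omega) ?_
  have h1 : q.1 + ((dF η q + k : ℕ) : ZMod L) = r.1 + (k : ZMod L) := by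
    push_cast
    rw [hr_def, stepUR_fst]
    ring
  have h2 : r.2 - 1 = q.2 := by rw [hr_def, stepUR_snd]; ring
  rw [h1, ← h2]
  exact hk2

/-- The exact displacement identity `F_{sR q} = F_q + (A_{q₆}+1) - (A_q+1)`. -/
lemma dF_sR (hη : Interlaced m1 η) (hm : 0 < m1) {q : Site L N} (hq : η q = true) :
    dF η (sR η q) = dF η q + gA η (stepUR η q) - gA η q := by
  set r := stepUR η q with hr_def
  have hr : η r = true := stepUR_particle hη hm q
  set D := dF η q + gA η r - gA η q with hD_def
  have hclaim1 := gA_le_dF_add hη hm hq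
  -- `D` is a distance realising a particle
  have hmemD : η ((sR η q).1 + (D : ZMod L), (sR η q).2 + 1) = true := by
    have h1 : (sR η q).1 + (D : ZMod L) = r.1 + ((gA η r : ℕ) : ZMod L) := by
      show q.1 + ((gA η q : ℕ) : ZMod L) + (D : ZMod L) = r.1 + _
      rw [hD_def, Nat.cast_sub hclaim1, hr_def, stepUR_fst]
      push_cast
      ring
    have h2 : (sR η q).2 + 1 = r.2 := by
      show q.2 + 1 = r.2
      rw [hr_def, stepUR_snd]
    rw [h1, h2]
    exact sR_particle hr
  -- minimality
  have hmin : ∀ k < D, ¬ η ((sR η q).1 + (k : ZMod L), (sR η q).2 + 1) = true := by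
    intro k hkD hkpart
    have hKq : dF η q < gA η q := dF_lt_gA hη hm hq
    -- `m = gA q + k` is a particle of row `q.2+1` strictly between `r` and `sR r`
    set m := gA η q + k with hm_def
    have h1 : q.1 + ((m : ℕ) : ZMod L) = (sR η q).1 + (k : ZMod L) := by
      show q.1 + ((m : ℕ) : ZMod L) = q.1 + ((gA η q : ℕ) : ZMod L) + (k : ZMod L)
      rw [hm_def, Nat.cast_add, add_assoc]
    have hpart : η (q.1 + ((m : ℕ) : ZMod L), q.2 + 1) = true := by
      rw [h1]; exact hkpart
    refine gA_min hr (k := m - dF η q) (by omega) (by omega) ?_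
    have h3 : r.1 + ((m - dF η q : ℕ) : ZMod L) = q.1 + ((m : ℕ) : ZMod L) := by
      rw [Nat.cast_sub (by omega), hr_def, stepUR_fst]
      ring
    have h4 : r.2 = q.2 + 1 := by rw [hr_def, stepUR_snd]
    rw [h3, h4]
    exact hpart
  refine le_antisymm (Nat.sInf_le hmemD) ?_
  by_contra hcon
  push_neg at hcon
  have hmem := Nat.sInf_mem (⟨D, hmemD⟩ :
    Set.Nonempty {k : ℕ | η ((sR η q).1 + (k : ZMod L), (sR η q).2 + 1) = true})
  exact hmin _ hcon hmem

/-- `stepUR` commutes with `sR` on particles. -/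
lemma stepUR_sR_comm (hη : Interlaced m1 η) (hm : 0 < m1) {q : Site L N} (hq : η q = true) :
    stepUR η (sR η q) = sR η (stepUR η q) := by
  set r := stepUR η q with hr_def
  have hclaim1 := gA_le_dF_add hη hm hq
  have hD := dF_sR hη hm hq
  refine Prod.ext ?_ ?_
  · show (sR η q).1 + ((dF η (sR η q) : ℕ) : ZMod L) = r.1 + ((gA η r : ℕ) : ZMod L)
    rw [hD]
    show q.1 + ((gA η q : ℕ) : ZMod L) + _ = _
    rw [Nat.cast_sub hclaim1, hr_def, stepUR_fst]
    push_cast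
    ring
  · show (sR η q).2 + 1 = r.2
    rw [hr_def, stepUR_snd]
    rfl

/-- `sR` is injective on particles. -/
lemma sR_inj (hη : Interlaced m1 η) (hm : 0 < m1) {a b : Site L N}
    (ha : η a = true) (hb : η b = true) (h : sR η a = sR η b) : a = b := by
  have h2 : a.2 = b.2 := by
    have h2' := congrArg Prod.snd h
    simpa [sR] using h2'
  -- the left gap of `sR a` recovers `gA a`
  have key : ∀ c : Site L N, η c = true → dD η (sR η c) + 1 = gA η c := by
    intro c hc
    have hscp : η (sR η c) = true := sR_particle hc
    rw [gD_eq_sInf hscp]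
    refine le_antisymm ?_ ?_
    · refine Nat.sInf_le ⟨gA_pos c, ?_⟩
      have : (sR η c).1 - ((gA η c : ℕ) : ZMod L) = c.1 := by
        show c.1 + ((gA η c : ℕ) : ZMod L) - _ = c.1
        ring
      rw [this]
      show η (c.1, c.2) = true
      simpa using hc
    · by_contra hcon
      push_neg at hcon
      have hmem := Nat.sInf_mem (SD_nonempty hscp)
      set k := sInf {k : ℕ | 0 < k ∧ η ((sR η c).1 - (k : ZMod L), (sR η c).2) = true}
        with hk_def
      obtain ⟨hkpos, hkpart⟩ := hmem
      refine gA_min hc (k := gA η c - k) (by omega) (by omega) ?_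
      have : c.1 + ((gA η c - k : ℕ) : ZMod L) = (sR η c).1 - (k : ZMod L) := by
        rw [Nat.cast_sub (by omega)]
        show _ = c.1 + ((gA η c : ℕ) : ZMod L) - _
        ring
      rw [this]
      exact hkpart
  have hgg : gA η a = gA η b := by
    rw [← key a ha, ← key b hb, h]
  have h1 : a.1 = b.1 := by
    have := congrArg Prod.fst h
    show a.1 = b.1
    rw [show (sR η a).1 = a.1 + ((gA η a : ℕ) : ZMod L) from rfl,
      show (sR η b).1 = b.1 + ((gA η b : ℕ) : ZMod L) from rfl, hgg] at this
    exact add_right_cancel this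
  exact Prod.ext h1 h2

/-! #### Iterates of `stepUR` -/

lemma iterate_particle (hη : Interlaced m1 η) (hm : 0 < m1) {q : Site L N}
    (hq : η q = true) (n : ℕ) : η ((stepUR η)^[n] q) = true := by
  induction n with
  | zero => simpa using hq
  | succ n ih => rw [Function.iterate_succ_apply']; exact stepUR_particle hη hm _

lemma iterate_inj (hη : Interlaced m1 η) (hm : 0 < m1) {a b : Site L N}
    (ha : η a = true) (hb : η b = true) (n : ℕ)
    (h : (stepUR η)^[n] a = (stepUR η)^[n] b) : a = b := by
  induction n with
  | zero => simpa using h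
  | succ n ih =>
    rw [Function.iterate_succ_apply', Function.iterate_succ_apply'] at h
    exact ih (stepUR_inj hη hm (iterate_particle hη hm ha n) (iterate_particle hη hm hb n) h)

lemma cancel_iterate (hη : Interlaced m1 η) (hm : 0 < m1) {p : Site L N}
    (hp : η p = true) {s t : ℕ} (hst : s < t) (h : (stepUR η)^[s] p = (stepUR η)^[t] p) :
    ∃ k : ℕ, 0 < k ∧ (stepUR η)^[k] p = p := by
  refine ⟨t - s, by omega, ?_⟩
  have h1 : (stepUR η)^[t] p = (stepUR η)^[s] ((stepUR η)^[t - s] p) := by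
    rw [← Function.iterate_add_apply]
    congr 1
    omega
  rw [h1] at h
  exact (iterate_inj hη hm hp (iterate_particle hη hm hp _) s h).symm

lemma exists_return (hη : Interlaced m1 η) (hm : 0 < m1) {p : Site L N} (hp : η p = true) :
    ∃ t : ℕ, 0 < t ∧ (stepUR η)^[t] p = p := by
  have hni : ¬ Function.Injective
      (fun n : Fin (Fintype.card (Site L N) + 1) => (stepUR η)^[(n : ℕ)] p) := by
    intro hinj
    have := Fintype.card_le_of_injective _ hinj
    simp at this
  rw [Function.not_injective_iff] at hni
  obtain ⟨i, j, hij, hne⟩ := hni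
  rcases lt_trichotomy (i : ℕ) (j : ℕ) with h | h | h
  · exact cancel_iterate hη hm hp h hij
  · exact absurd (Fin.ext h) hne
  · exact cancel_iterate hη hm hp h hij.symm

lemma retTime_spec (hη : Interlaced m1 η) (hm : 0 < m1) {p : Site L N} (hp : η p = true) :
    0 < retTime η p ∧ (stepUR η)^[retTime η p] p = p := by
  have hne : {t : ℕ | 0 < t ∧ (stepUR η)^[t] p = p}.Nonempty := exists_return hη hm hp
  exact Nat.sInf_mem hne

lemma iterate_commute (p : Site L N) (t : ℕ) :
    (stepUR η)^[t] (stepUR η p) = stepUR η ((stepUR η)^[t] p) := by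
  rw [← Function.iterate_succ_apply, Function.iterate_succ_apply']

lemma retTime_stepUR (hη : Interlaced m1 η) (hm : 0 < m1) {p : Site L N}
    (hp : η p = true) : retTime η (stepUR η p) = retTime η p := by
  unfold retTime
  congr 1
  ext t
  simp only [Set.mem_setOf_eq, iterate_commute]
  refine and_congr_right fun _ => ⟨fun h => ?_, fun h => by rw [h]⟩
  exact iterate_inj hη hm (iterate_particle hη hm hp t) hp 1 (by simpa using h)

lemma iterate_sR_comm (hη : Interlaced m1 η) (hm : 0 < m1) {q : Site L N}
    (hq : η q = true) (n : ℕ) :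
    (stepUR η)^[n] (sR η q) = sR η ((stepUR η)^[n] q) := by
  induction n with
  | zero => rfl
  | succ n ih =>
    rw [Function.iterate_succ_apply', ih, stepUR_sR_comm hη hm (iterate_particle hη hm hq n),
      Function.iterate_succ_apply']

lemma retTime_sR (hη : Interlaced m1 η) (hm : 0 < m1) {p : Site L N}
    (hp : η p = true) : retTime η (sR η p) = retTime η p := by
  unfold retTime
  congr 1
  ext t
  simp only [Set.mem_setOf_eq, iterate_sR_comm hη hm hp]
  refine and_congr_right fun _ => ⟨fun h => ?_, fun h => by rw [h]⟩
  exact sR_inj hη hm (iterate_particle hη hm hp t) hp h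

lemma sum_shift {T : ℕ} (a : ℕ → ℕ) (hT : a T = a 0) :
    ∑ i ∈ Finset.range T, a (i + 1) = ∑ i ∈ Finset.range T, a i := by
  have h1 := Finset.sum_range_succ' a T
  have h2 := Finset.sum_range_succ a T
  rw [h2, hT] at h1
  exact Nat.add_right_cancel h1.symm

lemma windV_eq_of_retTime {p p' : Site L N} (h : retTime η p' = retTime η p) :
    windV η p' = windV η p := by unfold windV; rw [h]

lemma windH_stepUR (hη : Interlaced m1 η) (hm : 0 < m1) {p : Site L N}
    (hp : η p = true) : windH η (stepUR η p) = windH η p := by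
  unfold windH
  rw [retTime_stepUR hη hm hp]
  congr 1
  have hcong : ∀ i ∈ Finset.range (retTime η p),
      dF η ((stepUR η)^[i] (stepUR η p)) = (fun i => dF η ((stepUR η)^[i] p)) (i + 1) := by
    intro i _
    rw [← Function.iterate_succ_apply]
  rw [Finset.sum_congr rfl hcong]
  exact sum_shift (fun i => dF η ((stepUR η)^[i] p)) (by simp [(retTime_spec hη hm hp).2])

lemma windH_sR (hη : Interlaced m1 η) (hm : 0 < m1) {p : Site L N}
    (hp : η p = true) : windH η (sR η p) = windH η p := by
  unfold windH
  rw [retTime_sR hη hm hp]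
  congr 1
  set T := retTime η p with hT
  set a : ℕ → ℕ := fun i => dF η ((stepUR η)^[i] p) with ha
  set b : ℕ → ℕ := fun i => gA η ((stepUR η)^[i] p) with hb
  have hpart : ∀ i : ℕ, η ((stepUR η)^[i] p) = true := iterate_particle hη hm hp
  have hstep : ∀ i : ℕ, dF η ((stepUR η)^[i] (sR η p)) = a i + b (i + 1) - b i := by
    intro i
    rw [iterate_sR_comm hη hm hp, dF_sR hη hm (hpart i)]
    congr 2
    rw [hb]
    simp only [Function.iterate_succ_apply']
  have hle : ∀ i : ℕ, b i ≤ a i + b (i + 1) := by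
    intro i
    have := gA_le_dF_add hη hm (hpart i)
    simpa [ha, hb, Function.iterate_succ_apply'] using this
  have hbt : b T = b 0 := by rw [hb]; simp [hT, (retTime_spec hη hm hp).2]
  have key : (∑ i ∈ Finset.range T, (a i + b (i + 1) - b i)) + ∑ i ∈ Finset.range T, b i
      = (∑ i ∈ Finset.range T, a i) + ∑ i ∈ Finset.range T, b i := by
    rw [← Finset.sum_add_distrib]
    have : ∀ i ∈ Finset.range T, (a i + b (i + 1) - b i) + b i = a i + b (i + 1) := by
      intro i _
      have := hle i
      omega
    rw [Finset.sum_congr rfl this, Finset.sum_add_distrib, sum_shift b hbt]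
  have hsum : ∑ i ∈ Finset.range T, (a i + b (i + 1) - b i) = ∑ i ∈ Finset.range T, a i :=
    Nat.add_right_cancel key
  calc ∑ i ∈ Finset.range T, dF η ((stepUR η)^[i] (sR η p))
      = ∑ i ∈ Finset.range T, (a i + b (i + 1) - b i) :=
        Finset.sum_congr rfl fun i _ => hstep i
    _ = ∑ i ∈ Finset.range T, a i := hsum

/-! #### Reachability -/

lemma iterate_snd (p : Site L N) (k : ℕ) :
    ((stepUR η)^[k] p).2 = p.2 + (k : ZMod N) := by
  induction k with
  | zero => simp
  | succ k ih =>
    rw [Function.iterate_succ_apply', stepUR_snd, ih]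
    push_cast
    ring

lemma row_reach (hη : Interlaced m1 η) (hm : 0 < m1) :
    ∀ d : ℕ, ∀ a b : Site L N, η a = true → η b = true → a.2 = b.2 →
    (b.1 - a.1).val = d → ∃ n : ℕ, (sR η)^[n] a = b := by
  intro d
  induction d using Nat.strong_induction_on with
  | _ d ih =>
  intro a b ha hb hrow hd
  rcases Nat.eq_zero_or_pos d with h0 | h0
  · subst h0
    refine ⟨0, ?_⟩
    have hz : b.1 - a.1 = 0 := by
      have := ZMod.val_eq_zero (b.1 - a.1)
      exact this.mp hd
    have h1 : a.1 = b.1 := (sub_eq_zero.mp hz).symm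
    simp [Prod.ext h1 hrow]
  · have hvc : ((d : ℕ) : ZMod L) = b.1 - a.1 := by
      rw [← hd]
      simp [ZMod.natCast_val, ZMod.cast_id]
    have hmem : d ∈ {k : ℕ | 0 < k ∧ η (a.1 + (k : ZMod L), a.2) = true} := by
      refine ⟨h0, ?_⟩
      have h1 : a.1 + ((d : ℕ) : ZMod L) = b.1 := by rw [hvc]; ring
      rw [h1, hrow]
      simpa using hb
    have hg : gA η a ≤ d := by rw [gA_eq_sInf ha]; exact Nat.sInf_le hmem
    have hdL : d < L := by rw [← hd]; exact ZMod.val_lt _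
    have hnew : (b.1 - (sR η a).1).val = d - gA η a := by
      have h1 : b.1 - (sR η a).1 = ((d - gA η a : ℕ) : ZMod L) := by
        rw [Nat.cast_sub hg]
        show b.1 - (a.1 + ((gA η a : ℕ) : ZMod L)) = ((d : ℕ) : ZMod L) - _
        rw [hvc]
        ring
      rw [h1, ZMod.val_cast_of_lt (by omega)]
    have hlt : d - gA η a < d := by have := gA_pos (η := η) a; omega
    obtain ⟨n, hn⟩ := ih _ hlt (sR η a) b (sR_particle ha) hb hrow hnew
    exact ⟨n + 1, by rw [Function.iterate_succ_apply]; exact hn⟩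

lemma wind_iterate_stepUR (hη : Interlaced m1 η) (hm : 0 < m1) {p : Site L N}
    (hp : η p = true) (k : ℕ) :
    windH η ((stepUR η)^[k] p) = windH η p ∧ windV η ((stepUR η)^[k] p) = windV η p := by
  induction k with
  | zero => simp
  | succ k ih =>
    rw [Function.iterate_succ_apply']
    have hq := iterate_particle hη hm hp k
    exact ⟨(windH_stepUR hη hm hq).trans ih.1,
      (windV_eq_of_retTime (retTime_stepUR hη hm hq)).trans ih.2⟩

lemma wind_iterate_sR (hη : Interlaced m1 η) (hm : 0 < m1) {p : Site L N}
    (hp : η p = true) (k : ℕ) :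
    windH η ((sR η)^[k] p) = windH η p ∧ windV η ((sR η)^[k] p) = windV η p := by
  induction k with
  | zero => simp
  | succ k ih =>
    rw [Function.iterate_succ_apply']
    have hq : η ((sR η)^[k] p) = true := by
      clear ih
      induction k with
      | zero => simpa using hp
      | succ k ih2 => rw [Function.iterate_succ_apply']; exact sR_particle ih2
    exact ⟨(windH_sR hη hm hq).trans ih.1,
      (windV_eq_of_retTime (retTime_sR hη hm hq)).trans ih.2⟩

end Aux

/-- Starting from any particle `p` and repeatedly taking up-right
neighbours yields a path `Γ` that returns to `p` and forms a simple loop, and the winding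
numbers of `Γ` do not depend on the starting particle. -/
theorem upRight_loop_simple_winding_independent
    {L N : ℕ} [NeZero L] [NeZero N] (hL : 2 ≤ L) (hN : 2 ≤ N)
    (m1 : ℕ) (hm1 : 1 < m1) (hm1L : m1 < L)
    (η : Cfg L N) (hη : Interlaced m1 η)
    (p : Site L N) (hp : η p = true) :
    (∃ t : ℕ, 0 < t ∧ (stepUR η)^[t] p = p) ∧
    (∀ i j : ℕ, i < retTime η p → j < retTime η p →
      (stepUR η)^[i] p = (stepUR η)^[j] p → i = j) ∧
    (∀ p' : Site L N, η p' = true →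
      windH η p' = windH η p ∧ windV η p' = windV η p) := by
  have hm : 0 < m1 := by omega
  refine ⟨exists_return hη hm hp, ?_, ?_⟩
  · have key : ∀ i j : ℕ, i < retTime η p → j < retTime η p → i < j →
        (stepUR η)^[i] p = (stepUR η)^[j] p → False := by
      intro i j hi hj hij h
      have h1 : (stepUR η)^[j] p = (stepUR η)^[i] ((stepUR η)^[j - i] p) := by
        rw [← Function.iterate_add_apply]
        congr 1
        omega
      rw [h1] at h
      have h2 := iterate_inj hη hm hp (iterate_particle hη hm hp _) i h
      have h3 : retTime η p ≤ j - i := Nat.sInf_le ⟨by omega, h2.symm⟩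
      omega
    intro i j hi hj h
    rcases lt_trichotomy i j with hlt | heq | hgt
    · exact absurd h (fun h => key i j hi hj hlt h)
    · exact heq
    · exact absurd h.symm (fun h => key j i hj hi hgt h)
  · intro p' hp'
    set k := (p'.2 - p.2).val with hk
    have hq := iterate_particle hη hm hp k
    have hrow : ((stepUR η)^[k] p).2 = p'.2 := by
      rw [iterate_snd, hk]
      simp [ZMod.natCast_val, ZMod.cast_id]
    obtain ⟨n, hn⟩ := row_reach hη hm ((p'.1 - ((stepUR η)^[k] p).1).val)
      ((stepUR η)^[k] p) p' hq hp' hrow rfl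
    have h1 := wind_iterate_sR hη hm hq n
    rw [hn] at h1
    have h2 := wind_iterate_stepUR hη hm hp k
    exact ⟨h1.1.trans h2.1, h1.2.trans h2.2⟩

end QWhittaker
end
end

section
/- If a configuration lies in Ω_{L,N;m1,m2} with m2 ≥ 1, then for every particle p the families V_p^+ and V_p^− contain at most N−1 particles. In particular the upward and downward edges form no loops, and V_p^+ has a unique highest particle r_p^+ while V_p^− has a unique lowest particle r_p^−. -/
/-!
Interlacing particle configurations on the discrete torus `T_{L,N}`,
the periodized `q`-Whittaker dynamics and its Gibbs measures
(Corwin–Toninelli, "A (2+1)-dimensional growth process with explicit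
stationary measures").
-/

open scoped Classical

noncomputable section

namespace QWhittaker

variable {L N : ℕ}

/-- Generic column lemma: if the column of `(x,y)` has a hole at offset `k·c`
(with `c = ±1`), then the family of consecutive particles in direction `c`
has at most `N-1` elements and a unique extremal particle. -/
lemma column_aux {L N : ℕ} [NeZero N] (η : Cfg L N) (x : ZMod L) (y c : ZMod N)
    (hp : η (x, y) = true) (k : ℕ) (hk0 : 0 < k) (hkN : k < N)
    (hkf : η (x, y + (k : ZMod N) * c) = false) :
    {z : Site L N | ∃ j : ℕ, z = (x, y + (j : ZMod N) * c) ∧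
        ∀ i : ℕ, i ≤ j → η (x, y + (i : ZMod N) * c) = true}.ncard ≤ N - 1 ∧
    ∃! z : Site L N, (z ∈ {z : Site L N | ∃ j : ℕ, z = (x, y + (j : ZMod N) * c) ∧
        ∀ i : ℕ, i ≤ j → η (x, y + (i : ZMod N) * c) = true}) ∧
      η (z.1, z.2 + c) = false := by
  set V : Set (Site L N) := {z : Site L N | ∃ j : ℕ, z = (x, y + (j : ZMod N) * c) ∧
        ∀ i : ℕ, i ≤ j → η (x, y + (i : ZMod N) * c) = true} with hV
  set S : Set ℕ := {j : ℕ | η (x, y + ((j + 1 : ℕ) : ZMod N) * c) = false} with hS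
  have hkS : k - 1 ∈ S := by
    simp only [hS, Set.mem_setOf_eq, Nat.sub_add_cancel hk0]
    exact hkf
  set h := sInf S with hh
  have hhmem : η (x, y + ((h + 1 : ℕ) : ZMod N) * c) = false := Nat.sInf_mem ⟨k - 1, hkS⟩
  have hhk : h ≤ k - 1 := Nat.sInf_le hkS
  have hocc : ∀ i : ℕ, i ≤ h → η (x, y + (i : ZMod N) * c) = true := by
    intro i hi
    match i, hi with
    | 0, _ => simpa using hp
    | (j+1), hi =>
      have hjS : j ∉ S := Nat.notMem_of_lt_sInf (by omega)
      simp only [hS, Set.mem_setOf_eq] at hjS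
      cases hb : η (x, y + ((j + 1 : ℕ) : ZMod N) * c)
      · exact absurd hb hjS
      · rfl
  have hjh : ∀ j : ℕ, (∀ i : ℕ, i ≤ j → η (x, y + (i : ZMod N) * c) = true) → j ≤ h := by
    intro j hj
    by_contra hlt
    push_neg at hlt
    have := hj (h + 1) (by omega)
    rw [hhmem] at this
    exact Bool.false_ne_true this
  constructor
  · have hsub : V ⊆ ↑((Finset.range (h + 1)).image
        fun j : ℕ => ((x, y + (j : ZMod N) * c) : Site L N)) := by
      rintro z ⟨j, rfl, hj⟩
      have hjle : j ≤ h := hjh j hj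
      simp only [Finset.coe_image, Set.mem_image, Finset.mem_coe, Finset.mem_range]
      exact ⟨j, by omega, rfl⟩
    calc V.ncard ≤ _ := Set.ncard_le_ncard hsub (Finset.finite_toSet _)
    _ = ((Finset.range (h + 1)).image
        fun j : ℕ => ((x, y + (j : ZMod N) * c) : Site L N)).card := Set.ncard_coe_finset _
    _ ≤ h + 1 := le_trans (Finset.card_image_le) (by simp)
    _ ≤ N - 1 := by omega
  · refine ⟨(x, y + (h : ZMod N) * c), ⟨⟨h, rfl, hocc⟩, ?_⟩, ?_⟩
    · show η (x, y + (h : ZMod N) * c + c) = false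
      have : y + (h : ZMod N) * c + c = y + ((h + 1 : ℕ) : ZMod N) * c := by
        push_cast; ring
      rw [this]; exact hhmem
    · rintro z ⟨⟨j, rfl, hj⟩, hf⟩
      have hjle : j ≤ h := hjh j hj
      have hje : j = h := by
        by_contra hne
        have hjlt : j < h := by omega
        have hjS : j ∉ S := Nat.notMem_of_lt_sInf hjlt
        simp only [hS, Set.mem_setOf_eq] at hjS
        apply hjS
        have : y + (j : ZMod N) * c + c = y + ((j + 1 : ℕ) : ZMod N) * c := by
          push_cast; ring
        rw [← this]
        exact hf
      rw [hje]
  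
/-- In a configuration of the sector `Ω_{L,N;m1,m2}` with `m2 ≥ 1`, the
families `V_p⁺` and `V_p⁻` contain at most `N-1` particles; in particular the upward and
downward edges form no loops and `V_p⁺` (resp. `V_p⁻`) has a unique highest (resp. lowest)
particle. -/
theorem Vplus_Vminus_card_le
    {L N : ℕ} [NeZero L] [NeZero N] (hL : 2 ≤ L) (hN : 2 ≤ N)
    (m1 m2 : ℕ) (hm1 : 1 < m1) (hm1L : m1 < L) (hm2 : 1 ≤ m2) (hm2N : m2 < N)
    (hslope : m1 * N + m2 * L < L * N)
    (q : ℝ) (hq0 : 0 ≤ q) (hq1 : q < 1)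
    (a : ZMod N → ℝ) (ha : ∀ t, 0 < a t)
    (η : Cfg L N) (hη : InSector m1 m2 η)
    (p : Site L N) (hp : η p = true) :
    (Vplus η p).ncard ≤ N - 1 ∧ (Vminus η p).ncard ≤ N - 1 ∧
    (∃! z : Site L N, z ∈ Vplus η p ∧ η (z.1, z.2 + 1) = false) ∧
    (∃! z : Site L N, z ∈ Vminus η p ∧ η (z.1, z.2 - 1) = false) := by
  have hN0 : 0 < N := by omega
  -- Step 1: the column of `p` has a hole, otherwise the winding numbers would force `m2 = 0`.
  have hhole : ∃ s : ZMod N, η (p.1, s) = false := by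
    by_contra hc
    push_neg at hc
    have hfull : ∀ s : ZMod N, η (p.1, s) = true := by
      intro s
      cases hs : η (p.1, s)
      · exact absurd hs (hc s)
      · rfl
    have hdF : ∀ s : ZMod N, dF η (p.1, s) = 0 := by
      intro s
      apply Nat.sInf_eq_zero.mpr
      left
      show η (p.1 + ((0 : ℕ) : ZMod L), s + 1) = true
      simpa using hfull (s + 1)
    have hiter : ∀ t : ℕ, (stepUR η)^[t] p = (p.1, p.2 + (t : ZMod N)) := by
      intro t
      induction t with
      | zero => simp
      | succ t ih =>
        rw [Function.iterate_succ_apply', ih]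
        show (p.1 + ((dF η (p.1, p.2 + (t : ZMod N)) : ℕ) : ZMod L), p.2 + (t : ZMod N) + 1)
          = (p.1, p.2 + ((t + 1 : ℕ) : ZMod N))
        rw [hdF]
        push_cast
        simp [add_assoc]
    have hret : retTime η p = N := by
      have hmem : N ∈ {t : ℕ | 0 < t ∧ (stepUR η)^[t] p = p} := by
        refine ⟨hN0, ?_⟩
        rw [hiter]
        simp [ZMod.natCast_self]
      refine le_antisymm (Nat.sInf_le hmem) (le_csInf ⟨N, hmem⟩ ?_)
      rintro t ⟨ht0, hteq⟩
      rw [hiter] at hteq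
      have h2 : p.2 + (t : ZMod N) = p.2 := congrArg Prod.snd hteq
      have h0 : (t : ZMod N) = 0 := by
        have := congrArg (fun x => x - p.2) h2
        simpa using this
      exact Nat.le_of_dvd ht0 ((ZMod.natCast_eq_zero_iff t N).mp h0)
    have hwH : windH η p = 0 := by
      unfold windH
      rw [hret, Finset.sum_eq_zero (fun i _ => by rw [hiter]; exact hdF _)]
      simp
    have hwV : windV η p = 1 := by
      unfold windV
      rw [hret, Nat.div_self hN0]
    have := hη.2 p hp
    rw [hwH, hwV] at this
    simp at this
    omega
  obtain ⟨s, hs⟩ := hhole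
  have hsne : s ≠ p.2 := by
    intro h
    rw [h, Prod.mk.eta] at hs
    rw [hp] at hs
    exact Bool.noConfusion hs
  have hp' : η (p.1, p.2) = true := by rw [Prod.mk.eta]; exact hp
  -- Apply the column lemma with c = 1
  have hplus := column_aux η p.1 p.2 1 hp' (s - p.2).val
    (by
      rcases Nat.eq_zero_or_pos (s - p.2).val with h0 | h0
      · exact absurd (sub_eq_zero.mp ((ZMod.val_eq_zero _).mp h0)) hsne
      · exact h0)
    (ZMod.val_lt _)
    (by
      rw [mul_one, ZMod.natCast_val, ZMod.cast_id]
      simpa using hs)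
  -- Apply the column lemma with c = -1
  have hminus := column_aux η p.1 p.2 (-1) hp' (p.2 - s).val
    (by
      rcases Nat.eq_zero_or_pos (p.2 - s).val with h0 | h0
      · exact absurd (sub_eq_zero.mp ((ZMod.val_eq_zero _).mp h0)).symm hsne
      · exact h0)
    (ZMod.val_lt _)
    (by
      rw [ZMod.natCast_val, ZMod.cast_id, mul_neg_one, ← sub_eq_add_neg]
      simpa using hs)
  have heqP : Vplus η p = {z : Site L N | ∃ j : ℕ, z = (p.1, p.2 + (j : ZMod N) * 1) ∧
      ∀ i : ℕ, i ≤ j → η (p.1, p.2 + (i : ZMod N) * 1) = true} := by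
    unfold Vplus
    simp [mul_one]
  have heqM : Vminus η p = {z : Site L N | ∃ j : ℕ, z = (p.1, p.2 + (j : ZMod N) * (-1)) ∧
      ∀ i : ℕ, i ≤ j → η (p.1, p.2 + (i : ZMod N) * (-1)) = true} := by
    unfold Vminus
    simp [mul_neg_one, sub_eq_add_neg]
  refine ⟨?_, ?_, ?_, ?_⟩
  · rw [heqP]; exact hplus.1
  · rw [heqM]; exact hminus.1
  · rw [heqP]
    convert hplus.2 using 3
  · rw [heqM]
    have := hminus.2
    simpa [sub_eq_add_neg] using this

end QWhittaker
end
end
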